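/- arXiv:1307.1626 — 5 statements merged into one kernel-verified Lean document; each statement's English description precedes it below -/
import Mathlib

section
/- Let (T(t))_{t≥0} be a bounded C₀-semigroup on a complex Banach space X with M := sup_{t≥0}‖T(t)‖. Let x, u, v ∈ X satisfy T(t)x = x − ∫₀^t T(r)u dr and T(t)u = u − ∫₀^t T(r)v dr for all t ≥ 0 (i.e. u = Ax and v = A²x). Then for all n ≥ 1 and t > 0 (Dunford–Segal approximation): ‖T(t)x − e^{−nt} Σ_{k=0}^∞ ((nt)^k/k!) T(k/n)x‖ ≤ 8M (t/n) ‖v‖, where the series converges absolutely in X. -/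
open MeasureTheory Set Complex

open scoped Nat

lemma DS.exp_tsum (l : ℝ) : ∑' k : ℕ, l ^ k / (k ! : ℝ) = Real.exp l := by
  rw [Real.exp_eq_exp_ℝ, NormedSpace.exp_eq_tsum_div]

lemma DS.summable_mul (l : ℝ) : Summable (fun k : ℕ => (k : ℝ) * (l ^ k / k !)) := by
  rw [← summable_nat_add_iff 1]
  have : (fun k : ℕ => ((k + 1 : ℕ) : ℝ) * (l ^ (k + 1) / (k + 1)!)) =
      fun k : ℕ => l * (l ^ k / k !) := by
    funext k
    rw [Nat.factorial_succ]
    push_cast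
    field_simp
    ring
  rw [this]
  exact (Real.summable_pow_div_factorial l).mul_left l

lemma DS.tsum_mul (l : ℝ) : ∑' k : ℕ, (k : ℝ) * (l ^ k / k !) = l * Real.exp l := by
  rw [Summable.tsum_eq_zero_add (DS.summable_mul l)]
  simp only [Nat.cast_zero, zero_mul, zero_add]
  have : (fun k : ℕ => ((k + 1 : ℕ) : ℝ) * (l ^ (k + 1) / (k + 1)!)) =
      fun k : ℕ => l * (l ^ k / k !) := by
    funext k
    rw [Nat.factorial_succ]
    push_cast
    field_simp
    ring
  rw [this, tsum_mul_left, DS.exp_tsum]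

lemma DS.shift2 (l : ℝ) : (fun k : ℕ => ((k + 2 : ℕ) : ℝ) * (((k + 2 : ℕ) : ℝ) - 1) *
    (l ^ (k + 2) / (k + 2)!)) = fun k : ℕ => l ^ 2 * (l ^ k / k !) := by
  funext k
  have h2 : ((k + 2)! : ℝ) = ((k + 2 : ℕ) : ℝ) * ((k + 1 : ℕ) : ℝ) * (k ! : ℝ) := by
    rw [Nat.factorial_succ, Nat.factorial_succ]; push_cast; ring
  rw [h2]
  have hk2 : ((k + 2 : ℕ) : ℝ) ≠ 0 := by positivity
  have hk1 : ((k + 1 : ℕ) : ℝ) ≠ 0 := by positivity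
  have hkf : (k ! : ℝ) ≠ 0 := by positivity
  push_cast
  field_simp
  ring

lemma DS.summable_mul2 (l : ℝ) :
    Summable (fun k : ℕ => (k : ℝ) * ((k : ℝ) - 1) * (l ^ k / k !)) := by
  rw [← summable_nat_add_iff 2]
  have := DS.shift2 l
  push_cast at this ⊢
  rw [this]
  exact (Real.summable_pow_div_factorial l).mul_left _

lemma DS.tsum_mul2 (l : ℝ) :
    ∑' k : ℕ, (k : ℝ) * ((k : ℝ) - 1) * (l ^ k / k !) = l ^ 2 * Real.exp l := by
  rw [Summable.tsum_eq_zero_add (DS.summable_mul2 l)]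
  have h1 : Summable (fun k : ℕ => ((k + 1 : ℕ) : ℝ) * (((k + 1 : ℕ) : ℝ) - 1) *
      (l ^ (k + 1) / (k + 1)!)) := by
    have := DS.summable_mul2 l
    rw [← summable_nat_add_iff 1] at this
    push_cast at this ⊢
    exact this
  rw [Summable.tsum_eq_zero_add h1]
  have := DS.shift2 l
  push_cast at this ⊢
  simp only [zero_mul, mul_zero, zero_add, zero_sub, mul_neg, neg_zero]
  have e2 : (fun b : ℕ => ((b : ℝ) + 1 + 1) * ((b : ℝ) + 1 + 1 - 1) * (l ^ (b + 1 + 1) / ((b + 1 + 1)! : ℝ))) = fun k : ℕ => l ^ 2 * (l ^ k / (k ! : ℝ)) := by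
    funext b
    have := congrFun this b
    convert this using 3 <;> ring_nf
  rw [e2, tsum_mul_left, DS.exp_tsum]
  norm_num

lemma DS.var_decomp (n : ℕ) (hn : 1 ≤ n) (t : ℝ) :
    (fun k : ℕ => ((k : ℝ) / n - t) ^ 2 * (((n : ℝ) * t) ^ k / k !)) =
    fun k : ℕ => (1 / (n : ℝ) ^ 2) * ((k : ℝ) * ((k : ℝ) - 1) * (((n : ℝ) * t) ^ k / k !))
      + (((1 / (n : ℝ) ^ 2) - 2 * t / n) * ((k : ℝ) * (((n : ℝ) * t) ^ k / k !))
      + t ^ 2 * (((n : ℝ) * t) ^ k / k !)) := by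
  funext k
  have hn0 : (n : ℝ) ≠ 0 := by positivity
  field_simp
  ring

lemma DS.summable_var (n : ℕ) (hn : 1 ≤ n) (t : ℝ) :
    Summable (fun k : ℕ => ((k : ℝ) / n - t) ^ 2 * (((n : ℝ) * t) ^ k / k !)) := by
  rw [DS.var_decomp n hn t]
  exact ((DS.summable_mul2 _).mul_left _).add (((DS.summable_mul _).mul_left _).add
    ((Real.summable_pow_div_factorial _).mul_left _))

lemma DS.tsum_var (n : ℕ) (hn : 1 ≤ n) (t : ℝ) :
    ∑' k : ℕ, ((k : ℝ) / n - t) ^ 2 * (((n : ℝ) * t) ^ k / k !)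
      = Real.exp ((n : ℝ) * t) * (t / n) := by
  have hn0 : (n : ℝ) ≠ 0 := by positivity
  rw [DS.var_decomp n hn t,
    Summable.tsum_add ((DS.summable_mul2 _).mul_left _)
      (((DS.summable_mul _).mul_left _).add ((Real.summable_pow_div_factorial _).mul_left _)),
    Summable.tsum_add ((DS.summable_mul _).mul_left _) ((Real.summable_pow_div_factorial _).mul_left _),
    tsum_mul_left, tsum_mul_left, tsum_mul_left, DS.tsum_mul2, DS.tsum_mul, DS.exp_tsum]
  field_simp
  ring

open MeasureTheory Set in
lemma DS.taylor {X : Type*} [NormedAddCommGroup X] [NormedSpace ℂ X] [CompleteSpace X]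
    (T : ℝ → X →L[ℂ] X) (M : ℝ)
    (hTcont : ∀ y : X, ContinuousOn (fun t => T t y) (Ici 0))
    (hM : ∀ r : ℝ, 0 ≤ r → ‖T r‖ ≤ M)
    (x u v : X)
    (hxu : ∀ r : ℝ, 0 ≤ r → T r x = x - ∫ ρ in (0:ℝ)..r, T ρ u)
    (huv : ∀ r : ℝ, 0 ≤ r → T r u = u - ∫ ρ in (0:ℝ)..r, T ρ v)
    (t s : ℝ) (ht : 0 ≤ t) (hs : 0 ≤ s) :
    ‖T t x - T s x - (s - t) • T t u‖ ≤ M * ‖v‖ * (s - t) ^ 2 := by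
  have hMv0 : 0 ≤ M * ‖v‖ :=
    mul_nonneg ((norm_nonneg (T 0)).trans (hM 0 le_rfl)) (norm_nonneg v)
  have hint : ∀ (y : X) (a b : ℝ), 0 ≤ a → 0 ≤ b →
      IntervalIntegrable (fun r => T r y) volume a b := fun y a b ha hb =>
    ((hTcont y).mono (fun z hz => le_trans (le_min ha hb) hz.1)).intervalIntegrable
  have key : ∀ (y w : X), (∀ r : ℝ, 0 ≤ r → T r y = y - ∫ ρ in (0:ℝ)..r, T ρ w) →
      ∀ a b : ℝ, 0 ≤ a → 0 ≤ b → T a y - T b y = ∫ r in a..b, T r w := by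
    intro y w h a b ha hb
    have hadj := intervalIntegral.integral_add_adjacent_intervals
      (hint w 0 a le_rfl ha) (hint w a b ha hb)
    rw [h a ha, h b hb, ← hadj]
    abel
  have hTu : T t x - T s x = ∫ r in t..s, T r u := key x u hxu t s ht hs
  have hD : T t x - T s x - (s - t) • T t u = ∫ r in t..s, (T r u - T t u) := by
    rw [intervalIntegral.integral_sub (hint u t s ht hs) intervalIntegrable_const,
      intervalIntegral.integral_const, ← hTu]
  have hcong : (∫ r in t..s, (T r u - T t u)) = ∫ r in t..s, (-(∫ ρ in t..r, T ρ v)) := by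
    apply intervalIntegral.integral_congr
    intro r hr
    have hr0 : (0:ℝ) ≤ r := le_trans (le_min ht hs) hr.1
    have h := key u v huv t r ht hr0
    show T r u - T t u = -∫ ρ in t..r, T ρ v
    rw [← h]
    abel
  rw [hD, hcong]
  have habs2 : (s - t) ^ 2 = |s - t| * |s - t| := by rw [abs_mul_abs_self, sq]
  have hbound : ∀ r ∈ Set.uIoc t s, ‖-(∫ ρ in t..r, T ρ v)‖ ≤ M * ‖v‖ * |s - t| := by
    intro r hr
    have hr0 : (0:ℝ) ≤ r := le_of_lt (lt_of_le_of_lt (le_min ht hs) hr.1)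
    rw [norm_neg]
    have hin : ∀ ρ ∈ Set.uIoc t r, ‖T ρ v‖ ≤ M * ‖v‖ := by
      intro ρ hρ
      have hρ0 : (0:ℝ) ≤ ρ := le_of_lt (lt_of_le_of_lt (le_min ht hr0) hρ.1)
      exact le_trans ((T ρ).le_opNorm v)
        (mul_le_mul_of_nonneg_right (hM ρ hρ0) (norm_nonneg v))
    have h1 := intervalIntegral.norm_integral_le_of_norm_le_const hin
    have hmm : |r - t| ≤ |s - t| := by
      rw [← max_sub_min_eq_abs t s, abs_sub_le_iff]
      constructor <;>
        linarith [min_le_left t s, le_max_left t s, le_of_lt hr.1, hr.2]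
    calc ‖∫ ρ in t..r, T ρ v‖ ≤ M * ‖v‖ * |r - t| := h1
      _ ≤ M * ‖v‖ * |s - t| := mul_le_mul_of_nonneg_left hmm hMv0
  calc ‖∫ r in t..s, (-(∫ ρ in t..r, T ρ v))‖ ≤ M * ‖v‖ * |s - t| * |s - t| :=
        intervalIntegral.norm_integral_le_of_norm_le_const hbound
    _ = M * ‖v‖ * (s - t) ^ 2 := by rw [habs2, mul_assoc]


/-- Rate in the Dunford–Segal approximation on `dom(A²)`: for a bounded `C₀`-semigroup `T`
with `sup ‖T(t)‖ ≤ M` and `x ∈ dom(A²)` (witnessed by `u = Ax`, `v = A²x`),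
`‖T(t)x - e^(-nt) Σ_k ((nt)^k/k!) T(k/n)x‖ ≤ 8M(t/n)‖v‖`, the series converging
absolutely. -/
theorem statement7 {X : Type*} [NormedAddCommGroup X] [NormedSpace ℂ X] [CompleteSpace X]
    (T : ℝ → X →L[ℂ] X) (M : ℝ)
    (hT0 : T 0 = 1)
    (hTadd : ∀ s t : ℝ, 0 ≤ s → 0 ≤ t → T (s + t) = (T s).comp (T t))
    (hTcont : ∀ x : X, ContinuousOn (fun t => T t x) (Ici 0))
    (hM : ∀ t : ℝ, 0 ≤ t → ‖T t‖ ≤ M)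
    (x u v : X)
    (hxu : ∀ r : ℝ, 0 ≤ r → T r x = x - ∫ ρ in (0:ℝ)..r, T ρ u)
    (huv : ∀ r : ℝ, 0 ≤ r → T r u = u - ∫ ρ in (0:ℝ)..r, T ρ v)
    (n : ℕ) (hn : 1 ≤ n) (t : ℝ) (ht : 0 < t) :
    Summable (fun k : ℕ => ‖(((n:ℝ) * t) ^ k / (Nat.factorial k : ℝ)) • T ((k:ℝ) / n) x‖) ∧
    ‖T t x - Real.exp (-((n:ℝ) * t)) •
        ∑' k : ℕ, (((n:ℝ) * t) ^ k / (Nat.factorial k : ℝ)) • T ((k:ℝ) / n) x‖ ≤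
      8 * M * (t / n) * ‖v‖ := by
  have hn0 : (0:ℝ) < n := by exact_mod_cast hn
  set l : ℝ := (n:ℝ) * t with hl
  have hl0 : 0 ≤ l := by positivity
  set q : ℕ → ℝ := fun k => l ^ k / (Nat.factorial k : ℝ) with hqdef
  have hq0 : ∀ k, 0 ≤ q k := fun k => by positivity
  have hqs : Summable q := Real.summable_pow_div_factorial l
  have hM0 : (0:ℝ) ≤ M := (norm_nonneg (T 0)).trans (hM 0 le_rfl)
  have hTx : ∀ k : ℕ, ‖T ((k:ℝ)/n) x‖ ≤ M * ‖x‖ := fun k =>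
    le_trans ((T _).le_opNorm x)
      (mul_le_mul_of_nonneg_right (hM _ (by positivity)) (norm_nonneg x))
  -- first conjunct
  have hsum1 : Summable (fun k : ℕ => ‖q k • T ((k:ℝ)/n) x‖) := by
    apply Summable.of_nonneg_of_le (fun k => norm_nonneg _)
      (fun k => ?_) (hqs.mul_right (M * ‖x‖))
    rw [norm_smul, Real.norm_eq_abs, _root_.abs_of_nonneg (hq0 k)]
    exact mul_le_mul_of_nonneg_left (hTx k) (hq0 k)
  refine ⟨hsum1, ?_⟩
  -- setup for second conjunct
  set E : ℝ := Real.exp l with hE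
  have hE0 : E ≠ 0 := Real.exp_ne_zero l
  have hmE : Real.exp (-l) = E⁻¹ := Real.exp_neg l
  have hEE : Real.exp (-l) * E = 1 := by rw [hmE]; field_simp
  set P : ℕ → ℝ := fun k => Real.exp (-l) * q k with hPdef
  have hP0 : ∀ k, 0 ≤ P k := fun k => mul_nonneg (Real.exp_nonneg _) (hq0 k)
  have hq_hs : HasSum q E := by
    have := hqs.hasSum
    rwa [DS.exp_tsum l] at this
  have hkq_hs : HasSum (fun k : ℕ => (k:ℝ) * q k) (l * E) := by
    have := (DS.summable_mul l).hasSum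
    rwa [DS.tsum_mul l] at this
  set S : X := ∑' k : ℕ, q k • T ((k:ℝ)/n) x with hS
  set D : ℕ → X := fun k => T t x - T ((k:ℝ)/n) x - ((k:ℝ)/n - t) • T t u with hD
  -- HasSum pieces
  have hW : Summable (fun k : ℕ => q k • T ((k:ℝ)/n) x) := hsum1.of_norm
  have hHS1 : HasSum (fun k : ℕ => P k • T t x) (T t x) := by
    have h1 : HasSum P 1 := by
      have := hq_hs.mul_left (Real.exp (-l))
      rwa [hEE] at this
    have := h1.smul_const (T t x)
    rwa [one_smul] at this
  have hHS2 : HasSum (fun k : ℕ => P k • T ((k:ℝ)/n) x)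
      (Real.exp (-l) • S) := by
    have := hW.hasSum.const_smul (Real.exp (-l))
    have heq : (fun k : ℕ => Real.exp (-l) • (q k • T ((k:ℝ)/n) x)) =
        fun k : ℕ => P k • T ((k:ℝ)/n) x := by
      funext k; rw [smul_smul]
    rwa [heq] at this
  have hHS3 : HasSum (fun k : ℕ => (P k * ((k:ℝ)/n - t)) • T t u) (0 : X) := by
    have hmean : HasSum (fun k : ℕ => P k * ((k:ℝ)/n - t)) 0 := by
      have h1 := hkq_hs.mul_left (Real.exp (-l) / n)
      have h2 := hq_hs.mul_left (Real.exp (-l) * t)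
      have h3 := h1.sub h2
      have heq : (fun k : ℕ => Real.exp (-l) / n * ((k:ℝ) * q k) -
          Real.exp (-l) * t * q k) = fun k : ℕ => P k * ((k:ℝ)/n - t) := by
        funext k
        simp only [hPdef]
        field_simp
      have hval : Real.exp (-l) / n * (l * E) - Real.exp (-l) * t * E = 0 := by
        rw [hl, hmE]
        field_simp
        ring
      rwa [heq, hval] at h3
    have := hmean.smul_const (T t u)
    rwa [zero_smul] at this
  have hHS : HasSum (fun k : ℕ => P k • D k) (T t x - Real.exp (-l) • S) := by
    have h := (hHS1.sub hHS2).sub hHS3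
    rw [sub_zero] at h
    have heq : (fun k : ℕ => P k • T t x - P k • T ((k:ℝ)/n) x -
        (P k * ((k:ℝ)/n - t)) • T t u) = fun k : ℕ => P k • D k := by
      funext k
      simp only [hD, smul_sub, smul_smul]
    rwa [heq] at h
  -- norm bound
  have hDk : ∀ k : ℕ, ‖D k‖ ≤ M * ‖v‖ * ((k:ℝ)/n - t) ^ 2 := fun k =>
    DS.taylor T M hTcont hM x u v hxu huv t ((k:ℝ)/n) ht.le (by positivity)
  have hgs : Summable (fun k : ℕ =>
      (M * ‖v‖ * Real.exp (-l)) * (((k:ℝ)/n - t) ^ 2 * q k)) :=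
    (DS.summable_var n hn t).mul_left _
  have hnormle : ∀ k : ℕ, ‖P k • D k‖ ≤
      (M * ‖v‖ * Real.exp (-l)) * (((k:ℝ)/n - t) ^ 2 * q k) := by
    intro k
    rw [norm_smul, Real.norm_eq_abs, _root_.abs_of_nonneg (hP0 k)]
    calc P k * ‖D k‖ ≤ P k * (M * ‖v‖ * ((k:ℝ)/n - t) ^ 2) :=
          mul_le_mul_of_nonneg_left (hDk k) (hP0 k)
      _ = (M * ‖v‖ * Real.exp (-l)) * (((k:ℝ)/n - t) ^ 2 * q k) := by
          simp only [hPdef]; ring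
  have hnorms : Summable (fun k : ℕ => ‖P k • D k‖) :=
    Summable.of_nonneg_of_le (fun k => norm_nonneg _) hnormle hgs
  have hfinal : ‖T t x - Real.exp (-l) • S‖ ≤ M * ‖v‖ * (t / n) := by
    rw [← hHS.tsum_eq]
    calc ‖∑' k : ℕ, P k • D k‖ ≤ ∑' k : ℕ, ‖P k • D k‖ :=
          norm_tsum_le_tsum_norm hnorms
      _ ≤ ∑' k : ℕ, (M * ‖v‖ * Real.exp (-l)) * (((k:ℝ)/n - t) ^ 2 * q k) :=
          Summable.tsum_le_tsum hnormle hnorms hgs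
      _ = (M * ‖v‖ * Real.exp (-l)) * (E * (t / n)) := by
          rw [tsum_mul_left, DS.tsum_var n hn t]
      _ = M * ‖v‖ * (t / n) := by
          rw [hmE]; field_simp
  have htn : (0:ℝ) ≤ t / n := by positivity
  calc ‖T t x - Real.exp (-l) • S‖ ≤ M * ‖v‖ * (t / n) := hfinal
    _ ≤ 8 * M * (t / n) * ‖v‖ := by
        nlinarith [mul_nonneg (mul_nonneg hM0 htn) (norm_nonneg v)]
end

section
/- Let (T(t))_{t≥0} be a bounded C₀-semigroup on a complex Banach space X with M := sup_{t≥0}‖T(t)‖. Let x, u, v ∈ X satisfy T(t)x = x − ∫₀^t T(r)u dr and T(t)u = u − ∫₀^t T(r)v dr for all t ≥ 0 (i.e. u = Ax and v = A²x). Then for all n ≥ 1 and t > 0 (Euler approximation): ‖T(t)x − ((n/t)^n/(n−1)!) ∫₀^∞ s^{n−1} e^{−ns/t} T(s)x ds‖ ≤ 8M (t²/n) ‖v‖. -/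
open MeasureTheory Set Complex

lemma aux_int (k : ℕ) {b : ℝ} (hb : 0 < b) :
    IntegrableOn (fun s : ℝ => s ^ k * Real.exp (-(b * s))) (Ioi 0) := by
  have h := integrableOn_rpow_mul_exp_neg_mul_rpow (p := 1) (s := (k : ℝ)) (b := b)
    (lt_of_lt_of_le neg_one_lt_zero (Nat.cast_nonneg k)) one_pos hb
  refine h.congr_fun (fun s hs => ?_) measurableSet_Ioi
  beta_reduce; rw [Real.rpow_one, Real.rpow_natCast, neg_mul]

lemma aux_eq (k : ℕ) {b : ℝ} (hb : 0 < b) :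
    ∫ s in Ioi (0:ℝ), s ^ k * Real.exp (-(b * s)) = (1/b) ^ (k+1) * (k.factorial : ℝ) := by
  have h := Real.integral_rpow_mul_exp_neg_mul_Ioi (a := (k : ℝ) + 1) (r := b)
    (by positivity) hb
  rw [Real.Gamma_nat_eq_factorial,
    show ((k:ℝ)+1) = ((k+1 : ℕ) : ℝ) by push_cast; ring, Real.rpow_natCast] at h
  rw [← h]
  refine setIntegral_congr_fun measurableSet_Ioi (fun s hs => ?_)
  rw [show ((k+1 : ℕ) : ℝ) - 1 = (k:ℝ) by push_cast; ring, Real.rpow_natCast]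

/-- Rate in Euler's approximation on `dom(A²)`: for a bounded `C₀`-semigroup `T` with
`sup ‖T(t)‖ ≤ M` and `x ∈ dom(A²)` (witnessed by `u = Ax`, `v = A²x`),
`‖T(t)x - ((n/t)^n/(n-1)!) ∫₀^∞ s^(n-1) e^(-ns/t) T(s)x ds‖ ≤ 8M(t²/n)‖v‖`. -/
theorem statement8 {X : Type*} [NormedAddCommGroup X] [NormedSpace ℂ X] [CompleteSpace X]
    (T : ℝ → X →L[ℂ] X) (M : ℝ)
    (hT0 : T 0 = 1)
    (hTadd : ∀ s t : ℝ, 0 ≤ s → 0 ≤ t → T (s + t) = (T s).comp (T t))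
    (hTcont : ∀ x : X, ContinuousOn (fun t => T t x) (Ici 0))
    (hM : ∀ t : ℝ, 0 ≤ t → ‖T t‖ ≤ M)
    (x u v : X)
    (hxu : ∀ r : ℝ, 0 ≤ r → T r x = x - ∫ ρ in (0:ℝ)..r, T ρ u)
    (huv : ∀ r : ℝ, 0 ≤ r → T r u = u - ∫ ρ in (0:ℝ)..r, T ρ v)
    (n : ℕ) (hn : 1 ≤ n) (t : ℝ) (ht : 0 < t) :
    ‖T t x - (((n:ℝ) / t) ^ n / (Nat.factorial (n - 1) : ℝ)) •
        ∫ s in Ioi (0:ℝ), (s ^ (n - 1) * Real.exp (-((n:ℝ) * s) / t)) • T s x‖ ≤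
      8 * M * (t ^ 2 / n) * ‖v‖ := by
  obtain ⟨m, rfl⟩ : ∃ m, n = m + 1 := ⟨n - 1, (Nat.succ_pred_eq_of_pos hn).symm⟩
  simp only [Nat.add_sub_cancel]
  push_cast
  set N : ℝ := (m:ℝ) + 1 with hN
  have hN0 : 0 < N := by positivity
  set b : ℝ := N / t with hb
  have hb0 : 0 < b := by positivity
  have hfac0 : (0:ℝ) < (m.factorial : ℝ) := by exact_mod_cast m.factorial_pos
  set c : ℝ := b ^ (m+1) / (m.factorial : ℝ) with hc
  have hc0 : 0 < c := div_pos (pow_pos hb0 _) hfac0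
  have hexp : ∀ s : ℝ, -(N * s) / t = -(b * s) := fun s => by rw [hb]; ring
  simp only [hexp]
  -- moments
  have hint : ∀ k : ℕ, IntegrableOn (fun s : ℝ => s ^ k * Real.exp (-(b * s))) (Ioi 0) :=
    fun k => aux_int k hb0
  have hval : ∀ k : ℕ, ∫ s in Ioi (0:ℝ), s ^ k * Real.exp (-(b * s))
      = (1/b) ^ (k+1) * (k.factorial : ℝ) := fun k => aux_eq k hb0
  have hA : c * ((1/b) ^ (m+1) * (m.factorial : ℝ)) = 1 := by
    rw [hc]; field_simp; rw [← mul_pow, mul_one_div_cancel hb0.ne', one_pow]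
  have hB : c * ((1/b) ^ (m+1+1) * ((m+1).factorial : ℝ)) = t := by
    have e : c * ((1/b) ^ (m+1+1) * ((m+1).factorial : ℝ)) = (c * ((1/b) ^ (m+1) * (m.factorial : ℝ))) * ((1/b) * (m+1)) := by
      push_cast [Nat.factorial_succ]; ring
    rw [e, hA, hb, ← hN]; field_simp
  have hC2 : N * (c * ((1/b) ^ (m+2+1) * ((m+2).factorial : ℝ))) = (N+1) * t^2 := by
    have e : N * (c * ((1/b) ^ (m+2+1) * ((m+2).factorial : ℝ))) = (c * ((1/b) ^ (m+1+1) * ((m+1).factorial : ℝ))) * (N * (1/b) * (m+2)) := by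
      push_cast [Nat.factorial_succ]; ring
    rw [e, hB, hb, hN]; field_simp; ring
  -- scalar integrability and values
  have intf : IntegrableOn (fun s : ℝ => c * (s ^ m * Real.exp (-(b * s)))) (Ioi 0) :=
    (hint m).const_mul c
  have intf1 : IntegrableOn (fun s : ℝ => c * (s ^ m * Real.exp (-(b * s))) * (s - t)) (Ioi 0) := by
    have h : IntegrableOn (fun s : ℝ => c * (s ^ (m+1) * Real.exp (-(b * s)))
        - c*t * (s ^ m * Real.exp (-(b * s)))) (Ioi 0) :=
      ((hint (m+1)).const_mul c).sub ((hint m).const_mul (c*t))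
    exact h.congr_fun (fun s _ => by ring) measurableSet_Ioi
  have intf2 : IntegrableOn (fun s : ℝ => c * (s ^ m * Real.exp (-(b * s))) * (s - t)^2)
      (Ioi 0) := by
    have h : IntegrableOn (fun s : ℝ => c * (s ^ (m+2) * Real.exp (-(b * s)))
        - 2*c*t * (s ^ (m+1) * Real.exp (-(b * s)))
        + c*t^2 * (s ^ m * Real.exp (-(b * s)))) (Ioi 0) :=
      (((hint (m+2)).const_mul c).sub ((hint (m+1)).const_mul (2*c*t))).add
        ((hint m).const_mul (c*t^2))
    exact h.congr_fun (fun s _ => by ring) measurableSet_Ioi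
  have hA' : ∫ s in Ioi (0:ℝ), c * (s ^ m * Real.exp (-(b * s))) = 1 := by
    rw [integral_const_mul, hval m]; exact hA
  have hIB : ∫ s in Ioi (0:ℝ), c * (s ^ m * Real.exp (-(b * s))) * (s - t) = 0 := by
    have h1 : ∫ s in Ioi (0:ℝ), c * (s ^ m * Real.exp (-(b * s))) * (s - t)
        = ∫ s in Ioi (0:ℝ), (c * (s ^ (m+1) * Real.exp (-(b * s)))
          - (c*t) * (s ^ m * Real.exp (-(b * s)))) :=
      setIntegral_congr_fun measurableSet_Ioi (fun s _ => by ring)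
    rw [h1, integral_sub ((hint (m+1)).const_mul c) ((hint m).const_mul (c*t)),
      integral_const_mul, integral_const_mul, hval (m+1), hval m]
    linear_combination hB - t * hA
  have hIC : ∫ s in Ioi (0:ℝ), c * (s ^ m * Real.exp (-(b * s))) * (s - t)^2 = t^2 / N := by
    have h1 : ∫ s in Ioi (0:ℝ), c * (s ^ m * Real.exp (-(b * s))) * (s - t)^2
        = ∫ s in Ioi (0:ℝ), ((c * (s ^ (m+2) * Real.exp (-(b * s)))
          - (2*c*t) * (s ^ (m+1) * Real.exp (-(b * s))))
          + (c*t^2) * (s ^ m * Real.exp (-(b * s)))) :=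
      setIntegral_congr_fun measurableSet_Ioi (fun s _ => by ring)
    have j21 : IntegrableOn (fun s : ℝ => c * (s ^ (m+2) * Real.exp (-(b * s)))
        - 2*c*t * (s ^ (m+1) * Real.exp (-(b * s)))) (Ioi 0) :=
      ((hint (m+2)).const_mul c).sub ((hint (m+1)).const_mul (2*c*t))
    rw [h1, integral_add j21 ((hint m).const_mul (c*t^2)),
      integral_sub ((hint (m+2)).const_mul c) ((hint (m+1)).const_mul (2*c*t)),
      integral_const_mul, integral_const_mul, integral_const_mul, hval (m+2), hval (m+1), hval m,
      eq_div_iff hN0.ne']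
    linear_combination hC2 - 2 * t * N * hB + t^2 * N * hA
  -- semigroup facts
  have hM0 : 0 ≤ M := le_trans (norm_nonneg _) (hM 0 le_rfl)
  have hIcc : ∀ (y : X) (a b' : ℝ), 0 ≤ a → 0 ≤ b' →
      IntervalIntegrable (fun ρ => T ρ y) volume a b' := by
    intro y a b' ha hb'
    apply ContinuousOn.intervalIntegrable
    exact (hTcont y).mono (fun ρ hρ => le_trans (le_min ha hb') hρ.1)
  have hTnorm : ∀ (y : X) (σ : ℝ), 0 ≤ σ → ‖T σ y‖ ≤ M * ‖y‖ := fun y σ hσ =>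
    le_trans ((T σ).le_opNorm y) (mul_le_mul_of_nonneg_right (hM σ hσ) (norm_nonneg y))
  have hstep : ∀ s : ℝ, 0 ≤ s → T s x - T t x = -∫ ρ in t..s, T ρ u := by
    intro s hs
    rw [hxu s hs, hxu t ht.le,
      ← intervalIntegral.integral_add_adjacent_intervals (hIcc u 0 t le_rfl ht.le)
        (hIcc u t s ht.le hs)]
    abel
  have hstepu : ∀ ρ : ℝ, 0 ≤ ρ → T ρ u - T t u = -∫ σ in t..ρ, T σ v := by
    intro ρ hρ
    rw [huv ρ hρ, huv t ht.le,
      ← intervalIntegral.integral_add_adjacent_intervals (hIcc v 0 t le_rfl ht.le)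
        (hIcc v t ρ ht.le hρ)]
    abel
  have hbd1 : ∀ ρ : ℝ, 0 ≤ ρ → ‖T ρ u - T t u‖ ≤ M * ‖v‖ * |ρ - t| := by
    intro ρ hρ
    rw [hstepu ρ hρ, norm_neg]
    apply intervalIntegral.norm_integral_le_of_norm_le_const
    intro σ hσ
    exact hTnorm v σ (le_trans (le_min ht.le hρ) hσ.1.le)
  set Gf : ℝ → X := fun s => T s x - T t x + (s - t) • T t u with hGf
  have hG : ∀ s : ℝ, 0 ≤ s → ‖Gf s‖ ≤ M * ‖v‖ * (s - t)^2 := by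
    intro s hs
    have heq : Gf s = -∫ ρ in t..s, (T ρ u - T t u) := by
      simp only [hGf]
      rw [intervalIntegral.integral_sub (hIcc u t s ht.le hs) intervalIntegrable_const,
        intervalIntegral.integral_const, hstep s hs]
      abel
    rw [heq, norm_neg]
    have hbd2 : ∀ ρ ∈ Set.uIoc t s, ‖T ρ u - T t u‖ ≤ M * ‖v‖ * |s - t| := by
      intro ρ hρ
      have hρ0 : 0 ≤ ρ := le_trans (le_min ht.le hs) hρ.1.le
      refine le_trans (hbd1 ρ hρ0) ?_
      have habs : max t s - min t s = |s - t| := by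
        rw [max_sub_min_eq_abs, abs_sub_comm]
      have h1 : |ρ - t| ≤ |s - t| := by
        rw [abs_le]
        have h2 := hρ.1.le
        have h3 := hρ.2
        have h4 := min_le_left t s
        have h5 := le_max_left t s
        constructor <;> linarith
      exact mul_le_mul_of_nonneg_left h1 (by positivity)
    exact le_trans (intervalIntegral.norm_integral_le_of_norm_le_const hbd2)
      (le_of_eq (by rw [mul_assoc, abs_mul_abs_self, ← pow_two]))
  -- continuity / integrability of vector integrands
  have hcf : Continuous (fun s : ℝ => c * (s ^ m * Real.exp (-(b * s)))) := by fun_prop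
  have hGcont : ContinuousOn Gf (Ici 0) :=
    ((hTcont x).sub continuousOn_const).add
      (((continuous_id.sub continuous_const).smul continuous_const).continuousOn)
  have intV1 : IntegrableOn (fun s : ℝ => (c * (s ^ m * Real.exp (-(b * s)))) • T s x)
      (Ioi 0) := by
    refine Integrable.mono' (intf.norm.mul_const (M * ‖x‖)) ?_ ?_
    · exact (hcf.continuousOn.smul ((hTcont x).mono Ioi_subset_Ici_self)).aestronglyMeasurable
        measurableSet_Ioi
    · refine (ae_restrict_iff' measurableSet_Ioi).2 (ae_of_all _ fun s hs => ?_)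
      rw [norm_smul]
      exact mul_le_mul_of_nonneg_left (hTnorm x s (le_of_lt hs)) (norm_nonneg _)
  have hbound : ∀ s : ℝ, s ∈ Ioi (0:ℝ) →
      ‖(c * (s ^ m * Real.exp (-(b * s)))) • Gf s‖
        ≤ (M * ‖v‖) * (c * (s ^ m * Real.exp (-(b * s))) * (s - t)^2) := by
    intro s hs
    have hs0 : (0:ℝ) < s := hs
    have hf0 : 0 ≤ c * (s ^ m * Real.exp (-(b * s))) :=
      mul_nonneg hc0.le (mul_nonneg (pow_nonneg hs0.le m) (Real.exp_nonneg _))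
    rw [norm_smul, Real.norm_eq_abs, _root_.abs_of_nonneg hf0]
    calc c * (s ^ m * Real.exp (-(b * s))) * ‖Gf s‖
        ≤ c * (s ^ m * Real.exp (-(b * s))) * (M * ‖v‖ * (s - t)^2) :=
          mul_le_mul_of_nonneg_left (hG s hs0.le) hf0
      _ = (M * ‖v‖) * (c * (s ^ m * Real.exp (-(b * s))) * (s - t)^2) := by ring
  have intV2 : IntegrableOn (fun s : ℝ => (c * (s ^ m * Real.exp (-(b * s)))) • Gf s)
      (Ioi 0) := by
    refine Integrable.mono' (intf2.const_mul (M * ‖v‖)) ?_ ?_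
    · exact (hcf.continuousOn.smul (hGcont.mono Ioi_subset_Ici_self)).aestronglyMeasurable
        measurableSet_Ioi
    · exact (ae_restrict_iff' measurableSet_Ioi).2 (ae_of_all _ hbound)
  -- main identity
  have e1 : c • (∫ s in Ioi (0:ℝ), (s ^ m * Real.exp (-(b * s))) • T s x)
      = ∫ s in Ioi (0:ℝ), (c * (s ^ m * Real.exp (-(b * s)))) • T s x := by
    rw [← integral_smul]
    simp_rw [smul_smul]
  have key : T t x - ∫ s in Ioi (0:ℝ), (c * (s ^ m * Real.exp (-(b * s)))) • T s x
      = - ∫ s in Ioi (0:ℝ), (c * (s ^ m * Real.exp (-(b * s)))) • Gf s := by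
    have h1 : T t x = ∫ s in Ioi (0:ℝ), (c * (s ^ m * Real.exp (-(b * s)))) • T t x := by
      rw [integral_smul_const, hA', one_smul]
    have h2 : EqOn
        (fun s : ℝ => (c * (s ^ m * Real.exp (-(b * s)))) • T t x
          - (c * (s ^ m * Real.exp (-(b * s)))) • T s x)
        (fun s : ℝ => (c * (s ^ m * Real.exp (-(b * s))) * (s - t)) • T t u
          - (c * (s ^ m * Real.exp (-(b * s)))) • Gf s) (Ioi 0) := by
      intro s _
      have h3 : T t x - T s x = (s - t) • T t u - Gf s := by simp only [hGf]; abel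
      calc (c * (s ^ m * Real.exp (-(b * s)))) • T t x
            - (c * (s ^ m * Real.exp (-(b * s)))) • T s x
          = (c * (s ^ m * Real.exp (-(b * s)))) • (T t x - T s x) := (smul_sub _ _ _).symm
        _ = (c * (s ^ m * Real.exp (-(b * s)))) • ((s - t) • T t u - Gf s) := by rw [h3]
        _ = (c * (s ^ m * Real.exp (-(b * s))) * (s - t)) • T t u
            - (c * (s ^ m * Real.exp (-(b * s)))) • Gf s := by rw [smul_sub, smul_smul]
    conv_lhs => rw [h1]
    rw [← integral_sub (intf.smul_const (T t x)) intV1,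
      setIntegral_congr_fun measurableSet_Ioi h2,
      integral_sub (intf1.smul_const (T t u)) intV2,
      integral_smul_const, hIB, zero_smul, zero_sub]
  rw [e1, key, norm_neg]
  refine le_trans (norm_integral_le_of_norm_le (intf2.const_mul (M * ‖v‖))
    ((ae_restrict_iff' measurableSet_Ioi).2 (ae_of_all _ hbound))) ?_
  rw [integral_const_mul, hIC]
  have ht2 : 0 ≤ t^2 / N := by positivity
  nlinarith [norm_nonneg v, mul_nonneg (mul_nonneg hM0 ht2) (norm_nonneg v)]
end

section
/- Let (T(t))_{t≥0} be a bounded C₀-semigroup on a complex Banach space X with M := sup_{t≥0}‖T(t)‖. For n ≥ 1 let R_n be the bounded operator R_n x := ∫₀^∞ e^{−ns} T(s)x ds (so R_n = (n+A)^{−1} with −A the generator). Let x, u, v ∈ X satisfy T(t)x = x − ∫₀^t T(r)u dr and T(t)u = u − ∫₀^t T(r)v dr for all t ≥ 0 (i.e. u = Ax and v = A²x). Then for all n ≥ 1 and t > 0 (Yosida approximation): ‖T(t)x − exp(−t(n·I − n²·R_n)) x‖ ≤ 16M (t/n) ‖v‖, where exp denotes the exponential of a bounded operator. -/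
open MeasureTheory Set Complex

set_option linter.unusedSectionVars false
set_option maxHeartbeats 1000000
set_option synthInstance.maxHeartbeats 400000

section yosHelpers
open Filter
variable {X : Type*} [NormedAddCommGroup X] [NormedSpace ℝ X] [CompleteSpace X]

lemma yos_shift (c : ℝ) (f : ℝ → X) :
    ∫ σ in Ioi (0:ℝ), f (σ + c) = ∫ τ in Ioi c, f τ := by
  have h := (measurePreserving_add_right volume c).setIntegral_preimage_emb
      (measurableEmbedding_addRight c) f (Ioi c)
  simpa using h

lemma yos_tendsto (ν : ℝ) (hν : 0 < ν) (k : ℕ) (a : ℝ) :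
    Tendsto (fun τ : ℝ => (τ - a)^k * Real.exp (-(ν * τ))) atTop (nhds 0) := by
  have h1 : Tendsto (fun y : ℝ => ν * (y - a)) atTop atTop := by
    apply Tendsto.const_mul_atTop hν
    exact tendsto_atTop_add_const_right _ (-a) tendsto_id
  have h2 := (Real.tendsto_pow_mul_exp_neg_atTop_nhds_zero k).comp h1
  have heq : (fun τ : ℝ => (τ - a)^k * Real.exp (-(ν * τ)))
      = fun τ => (ν⁻¹^k * Real.exp (-(ν*a))) *
        ((ν*(τ-a))^k * Real.exp (-(ν*(τ-a)))) := by
    funext τ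
    rw [show -(ν*τ) = -(ν*a) + -(ν*(τ-a)) by ring, Real.exp_add, mul_pow]
    field_simp
    rw [mul_assoc, ← mul_pow, one_div, inv_mul_cancel₀ hν.ne', one_pow, mul_one]
  rw [heq]
  simpa using h2.const_mul (ν⁻¹^k * Real.exp (-(ν*a)))

lemma yos_intScalar (ν : ℝ) (hν : 0 < ν) (k : ℕ) (a : ℝ) :
    IntegrableOn (fun τ : ℝ => (τ - a)^k * Real.exp (-(ν * τ))) (Ioi a) := by
  apply integrable_of_isBigO_exp_neg (half_pos hν)
  · exact (((continuous_id.sub continuous_const).pow k).mul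
      ((continuous_const.mul continuous_id).neg.rexp)).continuousOn
  · have ht := yos_tendsto (ν/2) (half_pos hν) k a
    rw [Asymptotics.isBigO_iff]
    refine ⟨1, ?_⟩
    have habs : Tendsto (fun τ : ℝ => |(τ - a)^k * Real.exp (-(ν/2 * τ))|) atTop (nhds 0) := by
      simpa using ht.abs
    filter_upwards [habs.eventually_lt_const (by norm_num : (0:ℝ) < 1)] with τ h1
    have hsplit : -(ν*τ) = -(ν/2*τ) + -(ν/2*τ) := by ring
    rw [hsplit, Real.exp_add, one_mul, Real.norm_eq_abs, Real.norm_eq_abs, ← mul_assoc]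
    calc |(τ - a)^k * Real.exp (-(ν/2*τ)) * Real.exp (-(ν/2*τ))|
        = |(τ-a)^k * Real.exp (-(ν/2*τ))| * Real.exp (-(ν/2*τ)) := by
          rw [_root_.abs_mul, _root_.abs_of_nonneg (Real.exp_pos _).le]
      _ ≤ 1 * Real.exp (-(ν/2*τ)) :=
          mul_le_mul_of_nonneg_right h1.le (Real.exp_pos _).le
      _ = |Real.exp (-(ν/2)*τ)| := by
          rw [one_mul, _root_.abs_of_nonneg (Real.exp_pos _).le]; ring_nf

lemma yos_intVec (ν : ℝ) (hν : 0 < ν) (k : ℕ) (a : ℝ) (f : ℝ → X) (hf : Continuous f)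
    (B : ℝ) (hB : ∀ τ, ‖f τ‖ ≤ B) :
    IntegrableOn (fun τ : ℝ => ((τ - a)^k * Real.exp (-(ν * τ))) • f τ) (Ioi a) := by
  apply Integrable.mono' (((yos_intScalar ν hν k a).mul_const B))
  · exact ((((continuous_id.sub continuous_const).pow k).mul
      ((continuous_const.mul continuous_id).neg.rexp)).smul hf).aestronglyMeasurable
  · filter_upwards [self_mem_ae_restrict measurableSet_Ioi] with τ hτ
    have h0 : 0 ≤ (τ - a)^k * Real.exp (-(ν * τ)) :=
      mul_nonneg (pow_nonneg (sub_nonneg.2 (le_of_lt hτ)) k) (Real.exp_pos _).le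
    rw [norm_smul, Real.norm_eq_abs, _root_.abs_of_nonneg h0]
    exact mul_le_mul_of_nonneg_left (hB τ) h0

lemma yos_gamma (ν : ℝ) (hν : 0 < ν) (k : ℕ) :
    ∫ σ in Ioi (0:ℝ), σ^k * Real.exp (-(ν * σ)) = (Nat.factorial k : ℝ) / ν^(k+1) := by
  have hcg : ∀ σ ∈ Ioi (0:ℝ), σ^k * Real.exp (-(ν*σ))
      = σ ^ (((k:ℝ)+1) - 1) * Real.exp (-(ν*σ)) := by
    intro σ hσ
    rw [add_sub_cancel_right, Real.rpow_natCast]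
  have hc2 : ((k:ℝ)+1) = ((k+1 : ℕ):ℝ) := by push_cast; ring
  rw [setIntegral_congr_fun measurableSet_Ioi hcg,
    Real.integral_rpow_mul_exp_neg_mul_Ioi (by positivity) hν]
  rw [hc2, Real.rpow_natCast]
  have hg : Real.Gamma ((k+1:ℕ):ℝ) = (Nat.factorial k : ℝ) := by
    push_cast
    exact Real.Gamma_nat_eq_factorial k
  rw [hg, one_div, inv_pow]
  field_simp

lemma yos_fub (ν : ℝ) (hν : 0 < ν) (k : ℕ) (f : ℝ → X) (hf : Continuous f)
    (B : ℝ) (hB : ∀ τ, ‖f τ‖ ≤ B) :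
    ∫ ρ in Ioi (0:ℝ), Real.exp (-(ν*ρ)) •
        (∫ σ in Ioi (0:ℝ), (σ^k * Real.exp (-(ν*σ))) • f (σ+ρ))
      = ∫ τ in Ioi (0:ℝ), ((τ^(k+1)/(k+1)) * Real.exp (-(ν*τ))) • f τ := by
  have hB0 : 0 ≤ B := le_trans (norm_nonneg _) (hB 0)
  set G : ℝ × ℝ → X := fun p => ((p.2 - p.1)^k * Real.exp (-(ν * p.2))) • f p.2 with hG
  set S : Set (ℝ × ℝ) := {p | 0 < p.1 ∧ p.1 < p.2} with hSdef
  have hS : MeasurableSet S := by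
    apply MeasurableSet.inter
    · exact measurableSet_lt measurable_const measurable_fst
    · exact measurableSet_lt measurable_fst measurable_snd
  have hGc : Continuous G := by
    apply Continuous.smul
    · exact ((continuous_snd.sub continuous_fst).pow k).mul
        ((continuous_const.mul continuous_snd).neg.rexp)
    · exact hf.comp continuous_snd
  -- step 1 : inner rewrite for ρ > 0
  have step1 : ∀ ρ : ℝ, 0 < ρ →
      Real.exp (-(ν*ρ)) • (∫ σ in Ioi (0:ℝ), (σ^k * Real.exp (-(ν*σ))) • f (σ+ρ))
        = ∫ τ : ℝ, S.indicator G (ρ, τ) := by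
    intro ρ hρ
    rw [← integral_smul]
    have hcong : ∀ σ ∈ Ioi (0:ℝ),
        Real.exp (-(ν*ρ)) • ((σ^k * Real.exp (-(ν*σ))) • f (σ+ρ))
          = (fun τ => (((τ-ρ)^k * Real.exp (-(ν*τ)))) • f τ) (σ + ρ) := by
      intro σ hσ
      simp only [add_sub_cancel_right, smul_smul]
      congr 1
      rw [show -(ν*(σ+ρ)) = -(ν*ρ) + -(ν*σ) by ring, Real.exp_add]
      ring
    rw [setIntegral_congr_fun measurableSet_Ioi hcong,
      yos_shift ρ (fun τ => (((τ-ρ)^k * Real.exp (-(ν*τ)))) • f τ),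
      ← integral_indicator measurableSet_Ioi]
    congr 1
    funext τ
    by_cases hτ : τ ∈ Ioi ρ
    · rw [Set.indicator_of_mem hτ, Set.indicator_of_mem (show (ρ,τ) ∈ S from ⟨hρ, hτ⟩)]
    · rw [Set.indicator_of_notMem hτ, Set.indicator_of_notMem (fun hm => hτ hm.2)]
  -- Integrability of the indicator on the product space
  have hφint : Integrable ((Ioi (0:ℝ)).indicator (fun a => B * Real.exp (-(ν*a)))) := by
    rw [integrable_indicator_iff measurableSet_Ioi]
    apply IntegrableOn.congr_fun ((yos_intScalar ν hν 0 0).mul_const B) _ measurableSet_Ioi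
    intro τ _; simp [mul_comm]
  have hψint : Integrable ((Ioi (0:ℝ)).indicator (fun a:ℝ => a^k * Real.exp (-(ν*a)))) := by
    rw [integrable_indicator_iff measurableSet_Ioi]
    apply IntegrableOn.congr_fun (yos_intScalar ν hν k 0) _ measurableSet_Ioi
    intro τ _; simp
  have hInt : Integrable (S.indicator G) (volume.prod volume) := by
    set φ : ℝ → ℝ := (Ioi (0:ℝ)).indicator (fun a => B * Real.exp (-(ν*a))) with hφ
    set ψ : ℝ → ℝ := (Ioi (0:ℝ)).indicator (fun a:ℝ => a^k * Real.exp (-(ν*a))) with hψ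
    have hφm : Measurable φ :=
      (measurable_const.mul (Real.measurable_exp.comp
        ((measurable_const.mul measurable_id).neg))).indicator measurableSet_Ioi
    have hψm : Measurable ψ :=
      ((measurable_id.pow_const k).mul (Real.measurable_exp.comp
        ((measurable_const.mul measurable_id).neg))).indicator measurableSet_Ioi
    have hD : Integrable (fun p : ℝ×ℝ => φ p.1 * ψ (p.2 - p.1)) (volume.prod volume) := by
      have hprod : Integrable (fun z : ℝ×ℝ => φ z.1 * ψ z.2) (volume.prod volume) :=
        hφint.mul_prod hψint
      have hmp := measurePreserving_prod_sub (volume : Measure ℝ) volume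
      have := (hmp.integrable_comp
        ((hφm.comp measurable_fst).mul (hψm.comp measurable_snd)).aestronglyMeasurable).mpr hprod
      exact this
    apply hD.mono' ((hGc.stronglyMeasurable.indicator hS).aestronglyMeasurable)
    apply Eventually.of_forall
    intro p
    have hφ0 : ∀ a, 0 ≤ φ a := by
      intro a; apply indicator_nonneg
      intro y _; exact mul_nonneg hB0 (Real.exp_pos _).le
    have hψ0 : ∀ a, 0 ≤ ψ a := by
      intro a; apply indicator_nonneg
      intro y hy
      have h0y : (0:ℝ) < y := hy
      positivity
    by_cases hp : p ∈ S
    · rw [indicator_of_mem hp]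
      obtain ⟨h1, h2⟩ := hp
      have e1 : φ p.1 = B * Real.exp (-(ν*p.1)) := indicator_of_mem h1 _
      have e2 : ψ (p.2 - p.1) = (p.2-p.1)^k * Real.exp (-(ν*(p.2-p.1))) :=
        indicator_of_mem (show p.2 - p.1 ∈ Ioi (0:ℝ) from sub_pos.2 h2) _
      rw [hG, norm_smul, Real.norm_eq_abs, e1, e2]
      have h0 : 0 ≤ (p.2 - p.1)^k * Real.exp (-(ν * p.2)) :=
        mul_nonneg (pow_nonneg (sub_nonneg.2 h2.le) k) (Real.exp_pos _).le
      rw [_root_.abs_of_nonneg h0]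
      calc (p.2 - p.1)^k * Real.exp (-(ν * p.2)) * ‖f p.2‖
          ≤ (p.2 - p.1)^k * Real.exp (-(ν * p.2)) * B :=
            mul_le_mul_of_nonneg_left (hB _) h0
        _ = B * Real.exp (-(ν*p.1)) * ((p.2-p.1)^k * Real.exp (-(ν*(p.2-p.1)))) := by
            rw [show -(ν*p.2) = -(ν*p.1) + -(ν*(p.2-p.1)) by ring, Real.exp_add]; ring
    · rw [indicator_of_notMem hp, norm_zero]
      exact mul_nonneg (hφ0 _) (hψ0 _)
  -- step 2 : write the LHS as a double integral over ℝ × ℝ and swap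
  have step2 : (∫ ρ in Ioi (0:ℝ), Real.exp (-(ν*ρ)) •
        (∫ σ in Ioi (0:ℝ), (σ^k * Real.exp (-(ν*σ))) • f (σ+ρ)))
      = ∫ ρ : ℝ, (∫ τ : ℝ, S.indicator G (ρ, τ)) := by
    rw [setIntegral_congr_fun measurableSet_Ioi (fun ρ hρ => step1 ρ hρ),
      ← integral_indicator measurableSet_Ioi]
    congr 1
    funext ρ
    rw [indicator_apply]
    split_ifs with h
    · rfl
    · symm
      have : ∀ τ : ℝ, S.indicator G (ρ, τ) = 0 := by
        intro τ
        apply indicator_of_notMem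
        exact fun hm => h hm.1
      simp [this]
  have step3 : (∫ ρ : ℝ, (∫ τ : ℝ, S.indicator G (ρ, τ)))
      = ∫ τ : ℝ, (∫ ρ : ℝ, S.indicator G (ρ, τ)) :=
    integral_integral_swap hInt
  -- step 4 : compute inner integral in ρ
  have step4 : ∀ τ : ℝ, (∫ ρ : ℝ, S.indicator G (ρ, τ))
      = (Ioi (0:ℝ)).indicator
          (fun τ => ((τ^(k+1)/(k+1)) * Real.exp (-(ν*τ))) • f τ) τ := by
    intro τ
    have hfun : (fun ρ => S.indicator G (ρ, τ))
        = (Ioo (0:ℝ) τ).indicator (fun ρ => (τ-ρ)^k • (Real.exp (-(ν*τ)) • f τ)) := by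
      funext ρ
      by_cases hm : ρ ∈ Ioo (0:ℝ) τ
      · rw [indicator_of_mem hm, indicator_of_mem (show (ρ,τ) ∈ S from ⟨hm.1, hm.2⟩)]
        rw [hG, smul_smul]
      · rw [indicator_of_notMem hm,
          indicator_of_notMem (fun hSm => hm ⟨hSm.1, hSm.2⟩)]
    rw [hfun, integral_indicator measurableSet_Ioo, integral_smul_const]
    by_cases hτ : τ ∈ Ioi (0:ℝ)
    · have hτ' : (0:ℝ) < τ := hτ
      have hIoo : ∫ ρ in Ioo (0:ℝ) τ, (τ-ρ)^k = τ^(k+1)/(k+1) := by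
        rw [← integral_Ioc_eq_integral_Ioo, ← intervalIntegral.integral_of_le hτ'.le]
        rw [intervalIntegral.integral_comp_sub_left (fun x => x^k) τ]
        simp [integral_pow]
      rw [hIoo, Set.indicator_of_mem hτ, smul_smul]
    · have hempty : Ioo (0:ℝ) τ = ∅ := Ioo_eq_empty (fun h : (0:ℝ) < τ => hτ h)
      rw [hempty, Set.indicator_of_notMem hτ]
      simp
  rw [step2, step3]
  rw [show (fun τ : ℝ => ∫ ρ : ℝ, S.indicator G (ρ, τ))
      = fun τ => (Ioi (0:ℝ)).indicator
        (fun τ => ((τ^(k+1)/(k+1)) * Real.exp (-(ν*τ))) • f τ) τ from funext step4]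
  rw [integral_indicator measurableSet_Ioi]

end yosHelpers

section yosMain
open Filter

/-- Rate in Yosida's approximation on `dom(A²)`: for a bounded `C₀`-semigroup `T` with
`sup ‖T(t)‖ ≤ M`, with resolvent `R_n x = ∫₀^∞ e^(-ns) T(s)x ds = (n+A)^(-1)x`, and
`x ∈ dom(A²)` (witnessed by `u = Ax`, `v = A²x`),
`‖T(t)x - exp(-t(n·I - n²·R_n))x‖ ≤ 16M(t/n)‖v‖`. -/
theorem statement9 {X : Type*} [NormedAddCommGroup X] [NormedSpace ℂ X] [CompleteSpace X]
    (T : ℝ → X →L[ℂ] X) (M : ℝ)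
    (hT0 : T 0 = 1)
    (hTadd : ∀ s t : ℝ, 0 ≤ s → 0 ≤ t → T (s + t) = (T s).comp (T t))
    (hTcont : ∀ x : X, ContinuousOn (fun t => T t x) (Ici 0))
    (hM : ∀ t : ℝ, 0 ≤ t → ‖T t‖ ≤ M)
    (n : ℕ) (hn : 1 ≤ n)
    (Rn : X →L[ℂ] X)
    (hRn : ∀ y : X, Rn y = ∫ s in Ioi (0:ℝ), Real.exp (-((n:ℝ) * s)) • T s y)
    (x u v : X)
    (hxu : ∀ r : ℝ, 0 ≤ r → T r x = x - ∫ ρ in (0:ℝ)..r, T ρ u)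
    (huv : ∀ r : ℝ, 0 ≤ r → T r u = u - ∫ ρ in (0:ℝ)..r, T ρ v)
    (t : ℝ) (ht : 0 < t) :
    ‖T t x - (NormedSpace.exp
        ((-t) • ((n:ℝ) • (1 : X →L[ℂ] X) - ((n:ℝ) ^ 2) • Rn))) x‖ ≤
      16 * M * (t / n) * ‖v‖ := by
  have hν : 0 < (n:ℝ) := by exact_mod_cast Nat.lt_of_lt_of_le Nat.zero_lt_one hn
  set ν : ℝ := (n : ℝ) with hνdef
  have hM0 : 0 ≤ M := le_trans (norm_nonneg _) (hM 0 le_rfl)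
  set A : X →L[ℂ] X := ν • (1 : X →L[ℂ] X) - (ν ^ 2) • Rn with hAdef
  -- globally continuous modification of the orbit maps
  set C : X → ℝ → X := fun y τ => T (max τ 0) y with hCdef
  have hCc : ∀ y, Continuous (C y) := by
    intro y
    have hmax : Continuous fun τ : ℝ => max τ 0 :=
      Continuous.max continuous_id continuous_const
    exact ContinuousOn.comp_continuous (s := Ici 0) (g := fun t => T t y)
      (f := fun τ => max τ 0) (hTcont y) hmax (fun τ => mem_Ici.2 (le_max_right _ _))
  have hCeq : ∀ (y : X) (τ : ℝ), 0 ≤ τ → C y τ = T τ y := by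
    intro y τ hτ; simp only [hCdef, max_eq_left hτ]
  have hCb : ∀ (y : X) (τ : ℝ), ‖C y τ‖ ≤ M * ‖y‖ := by
    intro y τ
    calc ‖T (max τ 0) y‖ ≤ ‖T (max τ 0)‖ * ‖y‖ := (T _).le_opNorm y
    _ ≤ M * ‖y‖ := mul_le_mul_of_nonneg_right (hM _ (le_max_right _ _)) (norm_nonneg y)
  have hRnC : ∀ y, Rn y = ∫ σ in Ioi (0:ℝ), Real.exp (-(ν*σ)) • C y σ := by
    intro y
    rw [hRn y]
    apply setIntegral_congr_fun measurableSet_Ioi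
    intro σ hσ
    dsimp only
    rw [hCeq y σ (le_of_lt hσ)]
  have hIvec : ∀ (k : ℕ) (y : X) (s : ℝ),
      IntegrableOn (fun σ : ℝ => (σ^k * Real.exp (-(ν*σ))) • C y (σ+s)) (Ioi 0) := by
    intro k y s
    have h := yos_intVec ν hν k 0 (fun τ => C y (τ+s))
      ((hCc y).comp (continuous_id.add continuous_const)) (M*‖y‖) (fun τ => hCb y _)
    apply IntegrableOn.congr_fun h _ measurableSet_Ioi
    intro σ _; dsimp only; rw [sub_zero]
  have hIvec0 : ∀ (y : X) (s : ℝ),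
      IntegrableOn (fun σ : ℝ => Real.exp (-(ν*σ)) • C y (σ+s)) (Ioi 0) := by
    intro y s
    apply IntegrableOn.congr_fun (hIvec 0 y s) _ measurableSet_Ioi
    intro σ _; dsimp only; rw [pow_zero, one_mul]
  have hTii : ∀ (w : X) (a b : ℝ), 0 ≤ a → 0 ≤ b →
      IntervalIntegrable (fun ρ => T ρ w) volume a b := by
    intro w a b ha hb
    apply ContinuousOn.intervalIntegrable
    apply (hTcont w).mono
    intro z hz
    exact le_trans (le_min ha hb) hz.1
  -- interval integrals of T agree with those of C
  have hTC : ∀ (w : X) (σ : ℝ), 0 ≤ σ →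
      ∫ ρ in (0:ℝ)..σ, T ρ w = ∫ ρ in (0:ℝ)..σ, C w ρ := by
    intro w σ hσ
    apply intervalIntegral.integral_congr
    intro ρ hρ
    rw [uIcc_of_le hσ] at hρ
    rw [hCeq w ρ hρ.1]
  -- the pair property propagates through the semigroup
  have hIDpair : ∀ (y w : X), (∀ r, 0 ≤ r → T r y = y - ∫ ρ in (0:ℝ)..r, T ρ w) →
      ∀ s, 0 ≤ s → ∀ r, 0 ≤ r →
        T r (T s y) = T s y - ∫ ρ in (0:ℝ)..r, T ρ (T s w) := by
    intro y w hyw s hs r hr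
    have h1 : T r (T s y) = T (r+s) y := by
      rw [hTadd r s hr hs]; rfl
    rw [h1, hyw (r+s) (by linarith), hyw s hs]
    have h2 : ∫ ρ in (0:ℝ)..r, T ρ (T s w) = ∫ ρ in (0:ℝ)..r, T (ρ+s) w := by
      apply intervalIntegral.integral_congr
      intro ρ hρ
      rw [uIcc_of_le hr] at hρ
      dsimp only
      rw [hTadd ρ s hρ.1 hs]; rfl
    have h3 : ∫ ρ in (0:ℝ)..r, T (ρ+s) w = ∫ ρ in s..(r+s), T ρ w := by
      have h := intervalIntegral.integral_comp_add_right (a := (0:ℝ)) (b := r)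
        (fun ρ => T ρ w) s
      simpa using h
    have h4 : (∫ ρ in (0:ℝ)..s, T ρ w) + ∫ ρ in s..(r+s), T ρ w
        = ∫ ρ in (0:ℝ)..(r+s), T ρ w :=
      intervalIntegral.integral_add_adjacent_intervals (hTii w 0 s le_rfl hs)
        (hTii w s (r+s) hs (by linarith))
    rw [h2, h3, ← h4]
    abel
  -- resolvent identity
  have hID1 : ∀ (y w : X), (∀ r, 0 ≤ r → T r y = y - ∫ ρ in (0:ℝ)..r, T ρ w) →
      ν • Rn y = y - Rn w := by
    intro y w hyw
    set G : ℝ → X := fun σ => ∫ ρ in (0:ℝ)..σ, C w ρ with hGdef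
    have hGc : Continuous G :=
      intervalIntegral.continuous_primitive (fun a b => (hCc w).intervalIntegrable a b) 0
    have hGd : ∀ σ : ℝ, HasDerivAt G (C w σ) σ := by
      intro σ
      exact intervalIntegral.integral_hasDerivAt_right
        ((hCc w).intervalIntegrable 0 σ)
        ((hCc w).stronglyMeasurableAtFilter _ _)
        (hCc w).continuousAt
    have hGb : ∀ σ : ℝ, 0 ≤ σ → ‖G σ‖ ≤ (M * ‖w‖) * σ := by
      intro σ hσ
      have h := intervalIntegral.norm_integral_le_of_norm_le_const
        (C := M * ‖w‖) (f := C w) (a := 0) (b := σ) (fun ρ _ => hCb w ρ)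
      rwa [sub_zero, _root_.abs_of_nonneg hσ] at h
    set H : ℝ → X := fun σ => (-(Real.exp (-(ν*σ)))/ν) • G σ with hHdef
    have hHd : ∀ σ : ℝ, HasDerivAt H
        ((-(Real.exp (-(ν*σ)))/ν) • C w σ + Real.exp (-(ν*σ)) • G σ) σ := by
      intro σ
      have h1 : HasDerivAt (fun σ : ℝ => -(ν*σ)) (-ν) σ := by
        have := ((hasDerivAt_id σ).const_mul ν).neg
        simp only [mul_one] at this
        exact this
      have h2 := h1.exp
      have h3 := (h2.neg).div_const ν
      have hsc : HasDerivAt (fun σ : ℝ => -(Real.exp (-(ν*σ)))/ν) (Real.exp (-(ν*σ))) σ := by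
        exact h3.congr_deriv (by field_simp)
      exact hsc.smul (hGd σ)
    have hHt : Tendsto H atTop (nhds 0) := by
      have hbd : ∀ᶠ σ in atTop,
          ‖H σ‖ ≤ ((M*‖w‖)/ν) * ((σ-0)^1 * Real.exp (-(ν*σ))) := by
        filter_upwards [eventually_ge_atTop (0:ℝ)] with σ hσ
        simp only [hHdef, norm_smul, Real.norm_eq_abs]
        rw [_root_.abs_div, _root_.abs_neg, _root_.abs_of_pos (Real.exp_pos _), _root_.abs_of_pos hν]
        calc Real.exp (-(ν*σ))/ν * ‖G σ‖ ≤ Real.exp (-(ν*σ))/ν * ((M*‖w‖)*σ) := by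
              apply mul_le_mul_of_nonneg_left (hGb σ hσ)
              positivity
          _ = ((M*‖w‖)/ν) * ((σ-0)^1 * Real.exp (-(ν*σ))) := by
              rw [sub_zero, pow_one]; ring
      have hlim : Tendsto (fun σ : ℝ => ((M*‖w‖)/ν) * ((σ-0)^1 * Real.exp (-(ν*σ))))
          atTop (nhds 0) := by
        have h := (yos_tendsto ν hν 1 0).const_mul ((M*‖w‖)/ν)
        simpa [mul_comm] using h
      exact squeeze_zero_norm' hbd hlim
    have hIh1 : IntegrableOn (fun σ : ℝ => Real.exp (-(ν*σ)) • G σ) (Ioi 0) := by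
      apply Integrable.mono' ((yos_intScalar ν hν 1 0).mul_const (M*‖w‖))
      · exact (((continuous_const.mul continuous_id).neg.rexp).smul hGc).aestronglyMeasurable
      · filter_upwards [self_mem_ae_restrict measurableSet_Ioi] with σ hσ
        have hσ0 : (0:ℝ) ≤ σ := le_of_lt hσ
        rw [norm_smul, Real.norm_eq_abs, _root_.abs_of_pos (Real.exp_pos _)]
        calc Real.exp (-(ν*σ)) * ‖G σ‖ ≤ Real.exp (-(ν*σ)) * ((M*‖w‖)*σ) :=
              mul_le_mul_of_nonneg_left (hGb σ hσ0) (Real.exp_pos _).le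
          _ = (σ-0)^1 * Real.exp (-(ν*σ)) * (M*‖w‖) := by rw [sub_zero, pow_one]; ring
    have hIh2 : IntegrableOn (fun σ : ℝ => (-(Real.exp (-(ν*σ)))/ν) • C w σ) (Ioi 0) := by
      apply Integrable.mono' ((yos_intScalar ν hν 0 0).mul_const ((M*‖w‖)/ν))
      · exact ((((continuous_const.mul continuous_id).neg.rexp).neg.div_const ν).smul
          (hCc w)).aestronglyMeasurable
      · filter_upwards [self_mem_ae_restrict measurableSet_Ioi] with σ hσ
        rw [norm_smul, Real.norm_eq_abs, _root_.abs_div, _root_.abs_neg, _root_.abs_of_pos (Real.exp_pos _),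
          _root_.abs_of_pos hν]
        calc Real.exp (-(ν*σ))/ν * ‖C w σ‖ ≤ Real.exp (-(ν*σ))/ν * (M*‖w‖) := by
              apply mul_le_mul_of_nonneg_left (hCb w σ); positivity
          _ = (σ-0)^0 * Real.exp (-(ν*σ)) * ((M*‖w‖)/ν) := by
              rw [sub_zero, pow_zero, one_mul]; ring
    have hzero : (∫ σ in Ioi (0:ℝ),
        ((-(Real.exp (-(ν*σ)))/ν) • C w σ + Real.exp (-(ν*σ)) • G σ)) = 0 - H 0 := by
      apply integral_Ioi_of_hasDerivAt_of_tendsto' (fun σ _ => hHd σ)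
        (hIh2.add hIh1) hHt
    have hH0 : H 0 = 0 := by
      simp [hHdef, hGdef, intervalIntegral.integral_same]
    rw [integral_add hIh2 hIh1, hH0, sub_zero] at hzero
    have hpart2 : (∫ σ in Ioi (0:ℝ), (-(Real.exp (-(ν*σ)))/ν) • C w σ)
        = -(ν⁻¹ • Rn w) := by
      rw [hRnC w, ← integral_smul, ← integral_neg]
      apply setIntegral_congr_fun measurableSet_Ioi
      intro σ _
      dsimp only
      rw [div_eq_inv_mul, mul_smul, neg_smul, smul_neg]
    rw [hpart2] at hzero
    have hpart1 : (∫ σ in Ioi (0:ℝ), Real.exp (-(ν*σ)) • G σ) = ν⁻¹ • Rn w := by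
      have h := neg_add_eq_zero.mp hzero
      exact h.symm
    -- now compute Rn y
    have hRny : Rn y = ν⁻¹ • y - ν⁻¹ • Rn w := by
      rw [hRnC y]
      have hcong : ∀ σ ∈ Ioi (0:ℝ), Real.exp (-(ν*σ)) • C y σ
          = Real.exp (-(ν*σ)) • y - Real.exp (-(ν*σ)) • G σ := by
        intro σ hσ
        have hσ0 : (0:ℝ) ≤ σ := le_of_lt hσ
        rw [hCeq y σ hσ0, hyw σ hσ0, smul_sub, hTC w σ hσ0]
      rw [setIntegral_congr_fun measurableSet_Ioi hcong]
      have hIa : IntegrableOn (fun σ : ℝ => Real.exp (-(ν*σ)) • y) (Ioi 0) := by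
        apply Integrable.smul_const
        apply IntegrableOn.congr_fun (yos_intScalar ν hν 0 0) _ measurableSet_Ioi
        intro σ _; dsimp only; rw [sub_zero, pow_zero, one_mul]
      rw [integral_sub hIa hIh1, hpart1, integral_smul_const]
      congr 1
      have hval : ∫ σ in Ioi (0:ℝ), Real.exp (-(ν*σ)) = ν⁻¹ := by
        have h := yos_gamma ν hν 0
        simp only [pow_zero, one_mul, Nat.factorial_zero, Nat.cast_one] at h
        rw [h]
        norm_num
      rw [hval]
    rw [hRny, smul_sub, smul_smul, smul_smul, mul_inv_cancel₀ hν.ne', one_smul, one_smul]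
  -- the generator identity
  have hID2 : ∀ s, 0 ≤ s → A (T s x) - T s u = -(Rn (T s v)) := by
    intro s hs
    have hx' := hID1 (T s x) (T s u) (hIDpair x u hxu s hs)
    have hu' := hID1 (T s u) (T s v) (hIDpair u v huv s hs)
    have happ : A (T s x) = ν • (T s x) - ν^2 • (Rn (T s x)) := by
      rw [hAdef]
      simp [ContinuousLinearMap.sub_apply, ContinuousLinearMap.smul_apply]
    rw [happ]
    have h2 : (ν^2) • (Rn (T s x)) = ν • (ν • (Rn (T s x))) := by
      rw [smul_smul, ← pow_two]
    rw [h2, hx', smul_sub, hu']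
    abel

  have hIsc : ∀ k : ℕ, IntegrableOn (fun σ : ℝ => σ^k * Real.exp (-(ν*σ))) (Ioi 0) := by
    intro k
    apply IntegrableOn.congr_fun (yos_intScalar ν hν k 0) _ measurableSet_Ioi
    intro σ _; dsimp only; rw [sub_zero]
  -- the resolvent power formula
  have hbase : ∀ s, 0 ≤ s →
      Rn (T s v) = ∫ σ in Ioi (0:ℝ), Real.exp (-(ν*σ)) • C v (σ+s) := by
    intro s hs
    rw [hRn (T s v)]
    apply setIntegral_congr_fun measurableSet_Ioi
    intro σ hσ
    dsimp only
    have h1 : T σ ((T s) v) = T (σ+s) v := by rw [hTadd σ s (le_of_lt hσ) hs]; rfl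
    have hσs : (0:ℝ) ≤ σ + s := by
      have := le_of_lt (mem_Ioi.mp hσ); linarith
    rw [h1, hCeq v (σ+s) hσs]
  have hKEY : ∀ k : ℕ, ∀ s, 0 ≤ s → (Rn^(k+1)) (T s v)
      = ((Nat.factorial k : ℝ))⁻¹ •
          ∫ σ in Ioi (0:ℝ), (σ^k * Real.exp (-(ν*σ))) • C v (σ+s) := by
    intro k
    induction k with
    | zero =>
      intro s hs
      rw [pow_one, hbase s hs, Nat.factorial_zero, Nat.cast_one, inv_one, one_smul]
      apply setIntegral_congr_fun measurableSet_Ioi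
      intro σ _
      dsimp only
      rw [pow_zero, one_mul]
    | succ k ih =>
      intro s hs
      have hpow : (Rn^(k+1+1)) (T s v) = (Rn^(k+1)) (Rn (T s v)) := by
        rw [pow_succ, ContinuousLinearMap.mul_apply]
      rw [hpow, hbase s hs,
        ← ContinuousLinearMap.integral_comp_comm (Rn^(k+1)) (hIvec0 v s)]
      have hstep : ∀ σ ∈ Ioi (0:ℝ), (Rn^(k+1)) (Real.exp (-(ν*σ)) • C v (σ+s))
          = (Nat.factorial k : ℝ)⁻¹ • (Real.exp (-(ν*σ)) •
              ∫ τ in Ioi (0:ℝ), (τ^k * Real.exp (-(ν*τ))) • C v (τ+(σ+s))) := by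
        intro σ hσ
        have hσs : (0:ℝ) ≤ σ + s := by
          have := le_of_lt (mem_Ioi.mp hσ); linarith
        rw [ContinuousLinearMap.map_smul_of_tower, hCeq v (σ+s) hσs, ih (σ+s) hσs,
          smul_comm]
      rw [setIntegral_congr_fun measurableSet_Ioi hstep, integral_smul]
      have hfub := yos_fub ν hν k (fun τ => C v (τ+s))
        ((hCc v).comp (continuous_id.add continuous_const)) (M*‖v‖) (fun τ => hCb v _)
      simp only [← add_assoc]
      rw [hfub]
      have hpull : ∀ τ ∈ Ioi (0:ℝ), ((τ^(k+1)/((k:ℝ)+1)) * Real.exp (-(ν*τ))) • C v (τ+s)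
          = ((k:ℝ)+1)⁻¹ • ((τ^(k+1) * Real.exp (-(ν*τ))) • C v (τ+s)) := by
        intro τ _
        rw [smul_smul]
        congr 1
        field_simp
      rw [setIntegral_congr_fun measurableSet_Ioi hpull, integral_smul, smul_smul]
      congr 1
      rw [Nat.factorial_succ]
      push_cast
      rw [mul_inv]
      ring
  have hKEYN : ∀ k : ℕ, ∀ s, 0 ≤ s → ‖(Rn^(k+1)) (T s v)‖ ≤ M * ‖v‖ / ν^(k+1) := by
    intro k s hs
    have hfact : (0:ℝ) < (Nat.factorial k : ℝ) := by
      exact_mod_cast Nat.factorial_pos k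
    rw [hKEY k s hs, norm_smul, Real.norm_eq_abs, _root_.abs_of_nonneg (by positivity)]
    have hb : ‖∫ σ in Ioi (0:ℝ), (σ^k * Real.exp (-(ν*σ))) • C v (σ+s)‖
        ≤ ∫ σ in Ioi (0:ℝ), (σ^k * Real.exp (-(ν*σ))) * (M*‖v‖) := by
      apply norm_integral_le_of_norm_le ((hIsc k).mul_const (M*‖v‖))
      filter_upwards [self_mem_ae_restrict measurableSet_Ioi] with σ hσ
      have hσ0 : (0:ℝ) < σ := hσ
      rw [norm_smul, Real.norm_eq_abs, _root_.abs_of_nonneg (by positivity)]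
      exact mul_le_mul_of_nonneg_left (hCb v _) (by positivity)
    have hval : ∫ σ in Ioi (0:ℝ), (σ^k * Real.exp (-(ν*σ))) * (M*‖v‖)
        = ((Nat.factorial k : ℝ) / ν^(k+1)) * (M*‖v‖) := by
      rw [integral_mul_const, yos_gamma ν hν k]
    calc (Nat.factorial k : ℝ)⁻¹ * ‖∫ σ in Ioi (0:ℝ), (σ^k * Real.exp (-(ν*σ))) • C v (σ+s)‖
        ≤ (Nat.factorial k : ℝ)⁻¹ * (((Nat.factorial k : ℝ) / ν^(k+1)) * (M*‖v‖)) := by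
          apply mul_le_mul_of_nonneg_left _ (by positivity)
          rw [← hval]; exact hb
      _ = M * ‖v‖ / ν^(k+1) := by field_simp
  let +nondep : NormedAlgebra ℚ (X →L[ℂ] X) := .restrictScalars ℚ ℝ (X →L[ℂ] X)
  -- norm bound for the exponential applied to the resolvent
  have hexpA : ∀ s : ℝ, 0 ≤ s → s ≤ t →
      ‖(NormedSpace.exp ((s - t) • A)) (Rn (T s v))‖ ≤ M * ‖v‖ / ν := by
    intro s hs hst
    set d : ℝ := (t - s) * ν^2 with hd
    have hd0 : 0 ≤ d := mul_nonneg (by linarith) (sq_nonneg ν)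
    have hsplit : (s - t) • A = ((s-t)*ν) • (1 : X →L[ℂ] X) + d • Rn := by
      rw [hAdef, smul_sub, smul_smul, smul_smul, sub_eq_add_neg, ← neg_smul]
      congr 1
      rw [hd]; ring
    have hcomm : Commute (((s-t)*ν) • (1 : X →L[ℂ] X)) (d • Rn) :=
      ((Commute.one_left Rn).smul_left _).smul_right _
    rw [hsplit, NormedSpace.exp_add_of_commute hcomm]
    have hexp1 : NormedSpace.exp (((s-t)*ν) • (1 : X →L[ℂ] X))
        = Real.exp ((s-t)*ν) • (1 : X →L[ℂ] X) := by
      rw [← Algebra.algebraMap_eq_smul_one, ← Algebra.algebraMap_eq_smul_one,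
        ← NormedSpace.map_exp (algebraMap ℝ (X →L[ℂ] X)) (continuous_algebraMap _ _)]
      congr 1
      rw [Real.exp_eq_exp_ℝ]
    rw [hexp1, ContinuousLinearMap.mul_apply, ContinuousLinearMap.smul_apply,
      ContinuousLinearMap.one_apply, norm_smul, Real.norm_eq_abs,
      _root_.abs_of_pos (Real.exp_pos _)]
    have hsum : Summable (fun k : ℕ => ((Nat.factorial k : ℝ))⁻¹ • (d • Rn)^k) :=
      NormedSpace.expSeries_summable' (𝕂 := ℝ) (d • Rn)
    have happly : (NormedSpace.exp (d • Rn)) (Rn (T s v))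
        = ∑' k : ℕ, ((Nat.factorial k : ℝ))⁻¹ • d^k • ((Rn^(k+1)) (T s v)) := by
      have hm := ContinuousLinearMap.map_tsum
        (ContinuousLinearMap.apply ℂ X (Rn (T s v))) hsum
      simp only [ContinuousLinearMap.apply_apply] at hm
      have hexp2 : NormedSpace.exp (d • Rn)
          = ∑' k : ℕ, ((Nat.factorial k : ℝ))⁻¹ • (d • Rn)^k := by
        rw [NormedSpace.exp_eq_tsum ℝ]
      rw [hexp2, hm]
      apply tsum_congr
      intro k
      rw [ContinuousLinearMap.smul_apply, smul_pow, ContinuousLinearMap.smul_apply,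
        ← ContinuousLinearMap.mul_apply, ← pow_succ]
    rw [happly]
    have hterm : ∀ k : ℕ, ‖((Nat.factorial k : ℝ))⁻¹ • d^k • ((Rn^(k+1)) (T s v))‖
        ≤ ((Nat.factorial k : ℝ))⁻¹ * (d^k * (M*‖v‖/ν^(k+1))) := by
      intro k
      have hfact : (0:ℝ) < (Nat.factorial k : ℝ) := by
        exact_mod_cast Nat.factorial_pos k
      rw [norm_smul, norm_smul, Real.norm_eq_abs, Real.norm_eq_abs,
        _root_.abs_of_nonneg (by positivity : (0:ℝ) ≤ (Nat.factorial k : ℝ)⁻¹),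
        _root_.abs_of_nonneg (pow_nonneg hd0 k)]
      apply mul_le_mul_of_nonneg_left _ (by positivity)
      exact mul_le_mul_of_nonneg_left (hKEYN k s hs) (pow_nonneg hd0 k)
    have hsummand : Summable
        (fun k : ℕ => ((Nat.factorial k : ℝ))⁻¹ * (d^k * (M*‖v‖/ν^(k+1)))) := by
      have h := (Real.summable_pow_div_factorial (d/ν)).mul_left (M*‖v‖/ν)
      apply h.congr
      intro k
      have hfact : ((Nat.factorial k : ℝ)) ≠ 0 := by
        exact_mod_cast (Nat.factorial_pos k).ne'
      rw [div_pow]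
      field_simp
      ring
    have hsumnorm : Summable
        (fun k : ℕ => ‖((Nat.factorial k : ℝ))⁻¹ • d^k • ((Rn^(k+1)) (T s v))‖) := by
      apply Summable.of_nonneg_of_le (fun k => norm_nonneg _) hterm hsummand
    have hts : ‖∑' k : ℕ, ((Nat.factorial k : ℝ))⁻¹ • d^k • ((Rn^(k+1)) (T s v))‖
        ≤ (M*‖v‖/ν) * Real.exp (d/ν) := by
      calc ‖∑' k : ℕ, ((Nat.factorial k : ℝ))⁻¹ • d^k • ((Rn^(k+1)) (T s v))‖
          ≤ ∑' k : ℕ, ‖((Nat.factorial k : ℝ))⁻¹ • d^k • ((Rn^(k+1)) (T s v))‖ :=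
            norm_tsum_le_tsum_norm hsumnorm
        _ ≤ ∑' k : ℕ, ((Nat.factorial k : ℝ))⁻¹ * (d^k * (M*‖v‖/ν^(k+1))) :=
            Summable.tsum_le_tsum hterm hsumnorm hsummand
        _ = (M*‖v‖/ν) * Real.exp (d/ν) := by
            have hcongr : ∀ k : ℕ,
                ((Nat.factorial k : ℝ))⁻¹ * (d^k * (M*‖v‖/ν^(k+1)))
                  = (M*‖v‖/ν) * ((d/ν)^k / (Nat.factorial k : ℝ)) := by
              intro k
              have hfact : ((Nat.factorial k : ℝ)) ≠ 0 := by
                exact_mod_cast (Nat.factorial_pos k).ne'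
              rw [div_pow]
              field_simp
              ring
            rw [tsum_congr hcongr, tsum_mul_left]
            congr 1
            rw [Real.exp_eq_exp_ℝ, NormedSpace.exp_eq_tsum_div]
    calc Real.exp ((s-t)*ν) * ‖∑' k : ℕ, ((Nat.factorial k : ℝ))⁻¹ • d^k •
          ((Rn^(k+1)) (T s v))‖
        ≤ Real.exp ((s-t)*ν) * ((M*‖v‖/ν) * Real.exp (d/ν)) :=
          mul_le_mul_of_nonneg_left hts (Real.exp_pos _).le
      _ = M * ‖v‖ / ν := by
          rw [show Real.exp ((s-t)*ν) * ((M*‖v‖/ν) * Real.exp (d/ν))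
              = (M*‖v‖/ν) * (Real.exp ((s-t)*ν) * Real.exp (d/ν)) by ring,
            ← Real.exp_add]
          have hz : (s-t)*ν + d/ν = 0 := by
            rw [hd]
            field_simp
            ring
          rw [hz, Real.exp_zero, mul_one]
  -- derivative of the orbit maps
  have hCd : ∀ (y w : X), (∀ r, 0 ≤ r → T r y = y - ∫ ρ in (0:ℝ)..r, T ρ w) →
      ∀ s : ℝ, 0 < s → HasDerivAt (C y) (-(C w s)) s := by
    intro y w hyw s hs
    have hGd : HasDerivAt (fun r : ℝ => ∫ ρ in (0:ℝ)..r, C w ρ) (C w s) s :=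
      intervalIntegral.integral_hasDerivAt_right ((hCc w).intervalIntegrable 0 s)
        ((hCc w).stronglyMeasurableAtFilter _ _) (hCc w).continuousAt
    have hF0 : HasDerivAt (fun r : ℝ => y - ∫ ρ in (0:ℝ)..r, C w ρ) (-(C w s)) s :=
      hGd.const_sub y
    apply hF0.congr_of_eventuallyEq
    filter_upwards [Ioi_mem_nhds hs] with r hr
    have hr0 : (0:ℝ) ≤ r := le_of_lt hr
    rw [hCeq y r hr0, hyw r hr0, hTC w r hr0]
  -- derivative of the exponential factor
  have hEd : ∀ s : ℝ, HasDerivAt (fun r : ℝ => NormedSpace.exp ((r - t) • A))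
      (NormedSpace.exp ((s - t) • A) * A) s := by
    intro s
    have h1 := hasDerivAt_exp_smul_const (𝕂 := ℝ) A (s - t)
    have h2 : HasDerivAt (fun r : ℝ => r - t) 1 s := (hasDerivAt_id s).sub_const t
    have h3 := HasDerivAt.scomp s h1 h2
    exact h3.congr_deriv (one_smul ℝ _)
  set RS : (X →L[ℂ] X) →L[ℝ] (X →L[ℝ] X) :=
    (ContinuousLinearMap.restrictScalarsIsometry ℂ X X ℝ ℝ).toContinuousLinearMap
    with hRSdef
  have hRSapp : ∀ (z : X →L[ℂ] X) (y : X), (RS z) y = z y := fun z y => rfl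
  set E : ℝ → (X →L[ℝ] X) := fun r => RS (NormedSpace.exp ((r - t) • A)) with hEdef
  have hEc : Continuous E := by
    apply RS.continuous.comp
    apply NormedSpace.exp_continuous.comp
    exact (continuous_id.sub continuous_const).smul continuous_const
  have hEdR : ∀ s : ℝ, HasDerivAt E (RS (NormedSpace.exp ((s - t) • A) * A)) s := by
    intro s
    exact RS.hasFDerivAt.comp_hasDerivAt s (hEd s)
  set F : ℝ → X := fun r => E r (C x r) with hFdef
  set F' : ℝ → X := fun r => -(E r (Rn (C v r))) with hF'def
  have hFc : Continuous F := hEc.clm_apply (hCc x)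
  have hF'c : Continuous F' := (hEc.clm_apply (Rn.continuous.comp (hCc v))).neg
  have hFd : ∀ s ∈ Ioo (0:ℝ) t, HasDerivAt F (F' s) s := by
    intro s hs
    have h := (hEdR s).clm_apply (hCd x u hxu s hs.1)
    have hval : (RS (NormedSpace.exp ((s - t) • A) * A)) (C x s)
          + E s (-(C u s)) = F' s := by
      rw [hF'def]
      dsimp only
      rw [hRSapp, hEdef]
      dsimp only
      rw [hRSapp, hRSapp, ContinuousLinearMap.mul_apply, map_neg,
        hCeq x s hs.1.le, hCeq u s hs.1.le, hCeq v s hs.1.le,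
        ← sub_eq_add_neg, ← map_sub, hID2 s hs.1.le, map_neg]
    rw [← hval]
    exact h
  have hFTC := intervalIntegral.integral_eq_sub_of_hasDeriv_right_of_le ht.le
    hFc.continuousOn (fun s hs => (hFd s hs).hasDerivWithinAt)
    (hF'c.intervalIntegrable 0 t)
  have hFt : F t = T t x := by
    rw [hFdef]
    dsimp only
    rw [hEdef]
    dsimp only
    rw [hRSapp, sub_self, zero_smul, NormedSpace.exp_zero, hCeq x t ht.le,
      ContinuousLinearMap.one_apply]
  have hF0v : F 0 = (NormedSpace.exp ((-t) • A)) x := by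
    rw [hFdef]
    dsimp only
    rw [hEdef]
    dsimp only
    rw [hRSapp, hCeq x 0 le_rfl, hT0, zero_sub, ContinuousLinearMap.one_apply]
  have hbound : ∀ s ∈ Set.uIoc (0:ℝ) t, ‖F' s‖ ≤ M * ‖v‖ / ν := by
    intro s hs
    rw [Set.uIoc_of_le ht.le] at hs
    rw [hF'def]
    dsimp only
    rw [hEdef]
    dsimp only
    rw [hRSapp, norm_neg, hCeq v s hs.1.le]
    exact hexpA s hs.1.le hs.2
  have hnorm := intervalIntegral.norm_integral_le_of_norm_le_const hbound
  rw [hFTC] at hnorm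
  have hexpc : NormedSpace.exp ((-t) • A) = NormedSpace.exp ((-t) • A) := by
    rfl
  rw [hexpc, ← hFt, ← hF0v]
  have htν : 0 < t / ν := div_pos ht hν
  calc ‖F t - F 0‖ ≤ M * ‖v‖ / ν * |t - 0| := hnorm
    _ = M * (t/ν) * ‖v‖ := by
        rw [sub_zero, _root_.abs_of_pos ht]; ring
    _ ≤ 16 * M * (t / ν) * ‖v‖ := by
        nlinarith [mul_nonneg (mul_nonneg hM0 htν.le) (norm_nonneg v)]

end yosMain
end

section
/- Let p be a nonconstant Bernstein function, i.e. p(z) = a₀ + b₀z + ∫₀^∞ (1 − e^{−zs}) dμ(s) for z ≥ 0, with a₀, b₀ ≥ 0 and μ a positive measure on (0,∞) with ∫ s/(1+s) dμ(s) < ∞, and with b₀ > 0 or μ ≠ 0. Let q : (0,∞) → ℂ be measurable, integrable on (0,∞), and essentially bounded on [0,a] for every a > 0. Then for every a > 0 and every t > 0: ∫₀^∞ e^{−tp(s)}|q(s)| ds ≤ t^{−1} [ ‖q‖_{L^∞[0,a]} / p′(a) + (∫_a^∞ |q(s)| ds) / p(a) ], where p′(a) = b₀ + ∫₀^∞ s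 e^{−as} dμ(s). -/
open MeasureTheory Set Complex

section BernsteinAux
open MeasureTheory Set
variable {μ : Measure ℝ}


lemma bern_key (x : ℝ) : x * Real.exp (-x) + Real.exp (-x) ≤ 1 := by
  have h := mul_le_mul_of_nonneg_right (Real.add_one_le_exp x) (Real.exp_pos (-x)).le
  rw [← Real.exp_add] at h
  simp at h
  nlinarith [h]

lemma bern_int1 {μ : Measure ℝ}
    (hμ : IntegrableOn (fun s : ℝ => s / (1 + s)) (Ioi 0) μ) {s : ℝ} (hs : 0 ≤ s) :
    IntegrableOn (fun r : ℝ => 1 - Real.exp (-s * r)) (Ioi 0) μ := by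
  apply Integrable.mono (hμ.const_mul (2 * max s 1))
    (Continuous.aestronglyMeasurable (by continuity))
  filter_upwards [ae_restrict_mem measurableSet_Ioi] with r hr
  simp only [mem_Ioi] at hr
  have h1r : (0:ℝ) < 1 + r := by linarith
  have hE0 : 0 < Real.exp (-s * r) := Real.exp_pos _
  have hE1 : Real.exp (-s * r) ≤ 1 := by
    rw [← Real.exp_zero]; apply Real.exp_le_exp.mpr; nlinarith
  have hexp : 1 - s * r ≤ Real.exp (-s * r) := by
    have := Real.add_one_le_exp (-s * r); linarith
  have hM : s ≤ max s 1 := le_max_left _ _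
  have hM1 : (1:ℝ) ≤ max s 1 := le_max_right _ _
  have hfrac : 0 ≤ r / (1 + r) := by positivity
  rw [Real.norm_eq_abs, Real.norm_eq_abs, _root_.abs_of_nonneg (by linarith),
    _root_.abs_of_nonneg (by positivity), mul_div_assoc']
  rw [le_div_iff₀ h1r]
  rcases le_total r 1 with h | h
  · nlinarith
  · nlinarith

lemma bern_int2 {μ : Measure ℝ}
    (hμ : IntegrableOn (fun s : ℝ => s / (1 + s)) (Ioi 0) μ) {a : ℝ} (ha : 0 < a) :
    IntegrableOn (fun r : ℝ => r * Real.exp (-a * r)) (Ioi 0) μ := by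
  apply Integrable.mono (hμ.const_mul (min a 1)⁻¹)
    (Continuous.aestronglyMeasurable (by continuity))
  filter_upwards [ae_restrict_mem measurableSet_Ioi] with r hr
  simp only [mem_Ioi] at hr
  have h1r : (0:ℝ) < 1 + r := by linarith
  have hm : 0 < min a 1 := lt_min ha one_pos
  have hE : Real.exp (-a * r) ≤ (1 + a * r)⁻¹ := by
    rw [neg_mul, Real.exp_neg]
    exact inv_anti₀ (by nlinarith) (by nlinarith [Real.add_one_le_exp (a * r)])
  have h2 : r * Real.exp (-a * r) ≤ r / (1 + a * r) := by
    rw [div_eq_mul_inv]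
    exact mul_le_mul_of_nonneg_left hE hr.le
  have h3 : r / (1 + a * r) ≤ r / (min a 1 * (1 + r)) := by
    apply div_le_div_of_nonneg_left hr.le (by positivity)
    nlinarith [min_le_left a 1, min_le_right a 1]
  have h4 : r / (min a 1 * (1 + r)) = (min a 1)⁻¹ * (r / (1 + r)) := by
    field_simp
  rw [Real.norm_eq_abs, Real.norm_eq_abs, _root_.abs_of_nonneg (by positivity),
    _root_.abs_of_nonneg (by positivity)]
  calc r * Real.exp (-a * r) ≤ r / (1 + a * r) := h2
    _ ≤ r / (min a 1 * (1 + r)) := h3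
    _ = (min a 1)⁻¹ * (r / (1 + r)) := h4

end BernsteinAux

/-- Lemma 6.6: if `p` is a nonconstant Bernstein function (Lévy data `(a₀, b₀, μ)`) and
`q` is integrable on `(0,∞)` and essentially bounded on `[0,a]` (with bound `Qa`), then
for all `a, t > 0`,
`∫₀^∞ e^(-tp(s))|q(s)| ds ≤ t⁻¹ [Qa/p′(a) + (∫_a^∞ |q|)/p(a)]`. -/
theorem statement10 (a₀ b₀ : ℝ) (ha₀ : 0 ≤ a₀) (hb₀ : 0 ≤ b₀)
    (μ : Measure ℝ)
    (hμ : IntegrableOn (fun s : ℝ => s / (1 + s)) (Ioi 0) μ)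
    (hnc : 0 < b₀ ∨ μ.restrict (Ioi 0) ≠ 0)
    (q : ℝ → ℂ) (hqm : Measurable q) (hqi : IntegrableOn q (Ioi 0))
    (a t : ℝ) (ha : 0 < a) (ht : 0 < t)
    (Qa : ℝ) (hQa : ∀ᵐ s ∂(volume.restrict (Icc (0:ℝ) a)), ‖q s‖ ≤ Qa) :
    (∫ s in Ioi (0:ℝ),
        Real.exp (-t * (a₀ + b₀ * s + ∫ r in Ioi (0:ℝ), (1 - Real.exp (-s * r)) ∂μ)) * ‖q s‖) ≤
      t⁻¹ * (Qa / (b₀ + ∫ r in Ioi (0:ℝ), r * Real.exp (-a * r) ∂μ) +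
        (∫ s in Ioi a, ‖q s‖) /
          (a₀ + b₀ * a + ∫ r in Ioi (0:ℝ), (1 - Real.exp (-a * r)) ∂μ)) := by
  -- notation
  set F : ℝ → ℝ := fun s => ∫ r in Ioi (0:ℝ), (1 - Real.exp (-(max s 0) * r)) ∂μ with hF
  -- F agrees with the inner integral for s ≥ 0
  have hFs : ∀ s : ℝ, 0 ≤ s →
      (∫ r in Ioi (0:ℝ), (1 - Real.exp (-s * r)) ∂μ) = F s := by
    intro s hs; rw [hF]; simp only [max_eq_left hs]
  -- F is monotone
  have hFmono : Monotone F := by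
    intro s1 s2 h
    apply setIntegral_mono_on (bern_int1 hμ (le_max_right _ _)) (bern_int1 hμ (le_max_right _ _))
      measurableSet_Ioi
    intro r hr
    simp only [mem_Ioi] at hr
    have : -(max s2 0) * r ≤ -(max s1 0) * r := by
      have := max_le_max h (le_refl (0:ℝ)); nlinarith
    linarith [Real.exp_le_exp.mpr this]
  have hFmeas : Measurable F := hFmono.measurable
  -- F nonneg
  have hFnonneg : ∀ s : ℝ, 0 ≤ F s := by
    intro s
    apply setIntegral_nonneg measurableSet_Ioi
    intro r hr
    simp only [mem_Ioi] at hr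
    have : Real.exp (-(max s 0) * r) ≤ 1 := by
      rw [← Real.exp_zero]; apply Real.exp_le_exp.mpr
      have := le_max_right s 0; nlinarith
    linarith
  -- key constants
  set D : ℝ := b₀ + ∫ r in Ioi (0:ℝ), r * Real.exp (-a * r) ∂μ with hD
  set Pa : ℝ := a₀ + b₀ * a + ∫ r in Ioi (0:ℝ), (1 - Real.exp (-a * r)) ∂μ with hPa
  have hIa_nonneg : 0 ≤ ∫ r in Ioi (0:ℝ), r * Real.exp (-a * r) ∂μ := by
    apply setIntegral_nonneg measurableSet_Ioi
    intro r hr; simp only [mem_Ioi] at hr; positivity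
  have hFa_nonneg : 0 ≤ ∫ r in Ioi (0:ℝ), (1 - Real.exp (-a * r)) ∂μ := by
    have := hFnonneg a; rw [hFs a ha.le]; exact this
  -- positivity of D and Pa
  have hDpos : 0 < D := by
    rcases hnc with hb | hμ0
    · rw [hD]; linarith
    · have hμpos : 0 < μ (Ioi 0) := by
        rw [pos_iff_ne_zero]; intro h; exact hμ0 (Measure.restrict_eq_zero.mpr h)
      have : 0 < ∫ r in Ioi (0:ℝ), r * Real.exp (-a * r) ∂μ := by
        rw [setIntegral_pos_iff_support_of_nonneg_ae]
        · refine lt_of_lt_of_le hμpos (measure_mono ?_)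
          intro r hr
          simp only [mem_Ioi] at hr
          constructor
          · simp only [Function.mem_support]
            positivity
          · exact hr
        · filter_upwards [ae_restrict_mem measurableSet_Ioi] with r hr
          simp only [mem_Ioi] at hr
          positivity
        · exact bern_int2 hμ ha
      rw [hD]; linarith
  have hPapos : 0 < Pa := by
    rcases hnc with hb | hμ0
    · rw [hPa]; nlinarith
    · have hμpos : 0 < μ (Ioi 0) := by
        rw [pos_iff_ne_zero]; intro h; exact hμ0 (Measure.restrict_eq_zero.mpr h)
      have : 0 < ∫ r in Ioi (0:ℝ), (1 - Real.exp (-a * r)) ∂μ := by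
        rw [setIntegral_pos_iff_support_of_nonneg_ae]
        · refine lt_of_lt_of_le hμpos (measure_mono ?_)
          intro r hr
          simp only [mem_Ioi] at hr
          refine ⟨?_, hr⟩
          simp only [Function.mem_support]
          have : Real.exp (-a * r) < 1 := by
            rw [← Real.exp_zero]; apply Real.exp_lt_exp.mpr; nlinarith
          intro hc; linarith [hc]
        · filter_upwards [ae_restrict_mem measurableSet_Ioi] with r hr
          simp only [mem_Ioi] at hr
          have : Real.exp (-a * r) ≤ 1 := by
            rw [← Real.exp_zero]; apply Real.exp_le_exp.mpr; nlinarith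
          simp only [Pi.zero_apply]; linarith
        · exact bern_int1 hμ ha.le
      rw [hPa]; nlinarith
  -- lower bound: for 0 < s ≤ a, D * s ≤ a₀ + b₀ s + F s
  have hlow : ∀ s : ℝ, 0 < s → s ≤ a → D * s ≤ a₀ + b₀ * s + F s := by
    intro s hs hsa
    have h1 : s * (∫ r in Ioi (0:ℝ), r * Real.exp (-a * r) ∂μ) ≤ F s := by
      rw [← integral_const_mul, ← hFs s hs.le]
      apply setIntegral_mono_on ((bern_int2 hμ ha).const_mul s) (bern_int1 hμ hs.le)
        measurableSet_Ioi
      intro r hr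
      simp only [mem_Ioi] at hr
      have hx : Real.exp (-a * r) ≤ Real.exp (-s * r) := by
        apply Real.exp_le_exp.mpr; nlinarith
      have hk := bern_key (s * r)
      have : s * r * Real.exp (-(s*r)) ≤ 1 - Real.exp (-(s*r)) := by linarith
      have hsr : -s * r = -(s * r) := by ring
      calc s * (r * Real.exp (-a * r)) ≤ s * (r * Real.exp (-s * r)) := by
            apply mul_le_mul_of_nonneg_left (mul_le_mul_of_nonneg_left hx hr.le) hs.le
        _ = s * r * Real.exp (-(s*r)) := by rw [hsr]; ring
        _ ≤ 1 - Real.exp (-(s*r)) := this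
        _ = 1 - Real.exp (-s * r) := by rw [hsr]
    rw [hD]; nlinarith
  -- monotonicity: for a ≤ s, Pa ≤ a₀ + b₀ s + F s
  have hmono : ∀ s : ℝ, a ≤ s → Pa ≤ a₀ + b₀ * s + F s := by
    intro s hsa
    have h1 : F a ≤ F s := hFmono hsa
    have : b₀ * a ≤ b₀ * s := by nlinarith
    rw [hPa, hFs a ha.le]; linarith
  -- the measurable version of the integrand
  set g : ℝ → ℝ := fun s => Real.exp (-t * (a₀ + b₀ * s + F s)) * ‖q s‖ with hg
  have hgmeas : Measurable g := by
    have h1 : Measurable fun s : ℝ => -t * (a₀ + b₀ * s + F s) := by fun_prop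
    exact (Real.measurable_exp.comp h1).mul hqm.norm
  have hgnonneg : ∀ s, 0 ≤ g s := fun s => mul_nonneg (Real.exp_pos _).le (norm_nonneg _)
  -- rewrite LHS
  have hLHS : (∫ s in Ioi (0:ℝ),
      Real.exp (-t * (a₀ + b₀ * s + ∫ r in Ioi (0:ℝ), (1 - Real.exp (-s * r)) ∂μ)) * ‖q s‖)
      = ∫ s in Ioi (0:ℝ), g s := by
    apply setIntegral_congr_fun measurableSet_Ioi
    intro s hs
    simp only [mem_Ioi] at hs
    rw [hg]; simp only [hFs s hs.le]
  rw [hLHS]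
  -- Qa ≥ 0
  have hQa0 : 0 ≤ Qa := by
    have hne : volume.restrict (Icc (0:ℝ) a) ≠ 0 := by
      intro hc
      rw [Measure.restrict_eq_zero] at hc
      rw [Real.volume_Icc] at hc
      simp only [ENNReal.ofReal_eq_zero, sub_zero] at hc
      linarith
    haveI : (ae (volume.restrict (Icc (0:ℝ) a))).NeBot := ae_neBot.mpr hne
    obtain ⟨s, hs⟩ := hQa.exists
    exact le_trans (norm_nonneg _) hs
  have hQa' : ∀ᵐ s ∂(volume.restrict (Ioc (0:ℝ) a)), ‖q s‖ ≤ Qa :=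
    ae_restrict_of_ae_restrict_of_subset Ioc_subset_Icc_self hQa
  clear_value F D Pa g
  -- integrability on Ioc 0 a
  have hint1 : IntegrableOn g (Ioc 0 a) := by
    apply Measure.integrableOn_of_bounded (by simp [Real.volume_Ioc]) hgmeas.aestronglyMeasurable
      (M := Qa)
    filter_upwards [hQa', ae_restrict_mem measurableSet_Ioc] with s hbd hmem
    obtain ⟨hs0, hsa⟩ := hmem
    have hX : 0 ≤ a₀ + b₀ * s + F s := by
      have := hFnonneg s; nlinarith
    have hexp1 : Real.exp (-t * (a₀ + b₀ * s + F s)) ≤ 1 := by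
      rw [← Real.exp_zero]; apply Real.exp_le_exp.mpr
      nlinarith [mul_nonneg ht.le hX]
    rw [Real.norm_eq_abs, _root_.abs_of_nonneg (hgnonneg s), hg]
    calc Real.exp (-t * (a₀ + b₀ * s + F s)) * ‖q s‖ ≤ 1 * Qa := by
          apply mul_le_mul hexp1 hbd (norm_nonneg _) zero_le_one
      _ = Qa := one_mul Qa
  -- integrability on Ioi a
  have hqnorm : IntegrableOn (fun s : ℝ => ‖q s‖) (Ioi a) := by
    have h0 : IntegrableOn (fun s : ℝ => ‖q s‖) (Ioi 0) := hqi.norm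
    exact h0.mono_set (Ioi_subset_Ioi ha.le)
  have hint2 : IntegrableOn g (Ioi a) := by
    apply Integrable.mono' hqnorm hgmeas.aestronglyMeasurable
    filter_upwards [ae_restrict_mem measurableSet_Ioi] with s hs
    simp only [mem_Ioi] at hs
    have hX : 0 ≤ a₀ + b₀ * s + F s := by
      have := hFnonneg s; nlinarith
    have hexp1 : Real.exp (-t * (a₀ + b₀ * s + F s)) ≤ 1 := by
      rw [← Real.exp_zero]; apply Real.exp_le_exp.mpr
      nlinarith [mul_nonneg ht.le hX]
    calc ‖g s‖ = Real.exp (-t * (a₀ + b₀ * s + F s)) * ‖q s‖ := by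
          rw [Real.norm_eq_abs, _root_.abs_of_nonneg (hgnonneg s), hg]
      _ ≤ 1 * ‖q s‖ := mul_le_mul_of_nonneg_right hexp1 (norm_nonneg _)
      _ = ‖q s‖ := one_mul _
  -- split the integral
  have hsplit : (∫ s in Ioi (0:ℝ), g s) = (∫ s in Ioc (0:ℝ) a, g s) + ∫ s in Ioi a, g s := by
    rw [← setIntegral_union (Ioc_disjoint_Ioi le_rfl) measurableSet_Ioi hint1 hint2,
      Ioc_union_Ioi_eq_Ioi ha.le]
  rw [hsplit]
  have htD : 0 < t * D := mul_pos ht hDpos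
  have htPa : 0 < t * Pa := mul_pos ht hPapos
  -- bound on (0, a]
  have hbound1 : (∫ s in Ioc (0:ℝ) a, g s) ≤ Qa * (t * D)⁻¹ := by
    have hexp_int : IntegrableOn (fun s : ℝ => Qa * Real.exp (-(t*D) * s)) (Ioi 0) :=
      ((exp_neg_integrableOn_Ioi 0 htD)).const_mul Qa
    have step1 : (∫ s in Ioc (0:ℝ) a, g s) ≤ ∫ s in Ioc (0:ℝ) a, Qa * Real.exp (-(t*D) * s) := by
      apply setIntegral_mono_ae_restrict hint1 (hexp_int.mono_set Ioc_subset_Ioi_self)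
      filter_upwards [hQa', ae_restrict_mem measurableSet_Ioc] with s hbd hmem
      obtain ⟨hs0, hsa⟩ := hmem
      have hexp : Real.exp (-t * (a₀ + b₀ * s + F s)) ≤ Real.exp (-(t*D) * s) := by
        apply Real.exp_le_exp.mpr
        have := hlow s hs0 hsa
        nlinarith
      rw [hg]
      calc Real.exp (-t * (a₀ + b₀ * s + F s)) * ‖q s‖
          ≤ Real.exp (-(t*D) * s) * Qa := by
            apply mul_le_mul hexp hbd (norm_nonneg _) (Real.exp_pos _).le
        _ = Qa * Real.exp (-(t*D) * s) := by ring
    have step2 : (∫ s in Ioc (0:ℝ) a, Qa * Real.exp (-(t*D) * s))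
        ≤ ∫ s in Ioi (0:ℝ), Qa * Real.exp (-(t*D) * s) := by
      apply setIntegral_mono_set hexp_int
      · refine Filter.Eventually.of_forall fun s => ?_
        simp only [Pi.zero_apply]
        exact mul_nonneg hQa0 (Real.exp_pos _).le
      · exact HasSubset.Subset.eventuallyLE Ioc_subset_Ioi_self
    have step3 : (∫ s in Ioi (0:ℝ), Qa * Real.exp (-(t*D) * s)) = Qa * (t * D)⁻¹ := by
      rw [integral_const_mul]
      congr 1
      have h := integral_comp_mul_left_Ioi (fun x => Real.exp (-x)) 0 htD
      simp only [mul_zero, integral_exp_neg_Ioi, neg_zero, Real.exp_zero, smul_eq_mul,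
        mul_one] at h
      simp only [neg_mul]
      exact h
    linarith
  -- bound on (a, ∞)
  have hbound2 : (∫ s in Ioi a, g s) ≤ (∫ s in Ioi a, ‖q s‖) * (t * Pa)⁻¹ := by
    have hqa := hqnorm
    have step1 : (∫ s in Ioi a, g s) ≤ ∫ s in Ioi a, Real.exp (-(t * Pa)) * ‖q s‖ := by
      apply setIntegral_mono_on hint2 (hqa.const_mul _) measurableSet_Ioi
      intro s hs
      simp only [mem_Ioi] at hs
      have hexp : Real.exp (-t * (a₀ + b₀ * s + F s)) ≤ Real.exp (-(t * Pa)) := by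
        apply Real.exp_le_exp.mpr
        have := hmono s hs.le
        nlinarith
      calc g s = Real.exp (-t * (a₀ + b₀ * s + F s)) * ‖q s‖ := by rw [hg]
        _ ≤ Real.exp (-(t * Pa)) * ‖q s‖ := mul_le_mul_of_nonneg_right hexp (norm_nonneg _)
    have step2 : (∫ s in Ioi a, Real.exp (-(t * Pa)) * ‖q s‖)
        = Real.exp (-(t * Pa)) * ∫ s in Ioi a, ‖q s‖ := integral_const_mul _ _
    have hexpinv : Real.exp (-(t * Pa)) ≤ (t * Pa)⁻¹ := by
      rw [Real.exp_neg]
      exact inv_anti₀ htPa (by linarith [Real.add_one_le_exp (t * Pa)])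
    have hInonneg : 0 ≤ ∫ s in Ioi a, ‖q s‖ :=
      setIntegral_nonneg measurableSet_Ioi (fun s _ => norm_nonneg _)
    calc (∫ s in Ioi a, g s) ≤ Real.exp (-(t * Pa)) * ∫ s in Ioi a, ‖q s‖ := by
          rw [← step2]; exact step1
      _ ≤ (t * Pa)⁻¹ * ∫ s in Ioi a, ‖q s‖ := mul_le_mul_of_nonneg_right hexpinv hInonneg
      _ = (∫ s in Ioi a, ‖q s‖) * (t * Pa)⁻¹ := by ring
  -- conclude
  have hfinal : Qa * (t * D)⁻¹ + (∫ s in Ioi a, ‖q s‖) * (t * Pa)⁻¹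
      = t⁻¹ * (Qa / D + (∫ s in Ioi a, ‖q s‖) / Pa) := by
    rw [mul_inv, mul_inv, div_eq_mul_inv, div_eq_mul_inv]
    ring
  linarith [hbound1, hbound2, hfinal.le, hfinal.ge]
end

section
/- Let (T(t))_{t≥0} be a bounded analytic C₀-semigroup on a complex Banach space X, encoded by: sup_{t≥0}‖T(t)‖ ≤ M₀, and a family (D(t))_{t>0} of bounded operators such that for every x ∈ X the map t ↦ T(t)x is differentiable on (0,∞) with derivative −D(t)x, and sup_{t>0} t‖D(t)‖ ≤ M₁. Let φ ∈ Φ with second-moment σ² = |φ″(0+)| and let (ν_t)_{t≥0} be the corresponding subordination measures. Then for every t > 0 and every x, u ∈ X with T(r)x = x − ∫₀^r T(ρ)u dρ for all r ≥ 0 (i.e. u = Ax): ‖T(t)x − ∫₀^∞ T(s)x dν_t(s)‖ ≤ (2M₀ + M₁) σ² ‖u‖. -/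
open MeasureTheory Set Complex

section AuxiliaryLemmas
open Function Filter

lemma aux_one_sub_le_exp (x : ℝ) : 1 - x ≤ Real.exp (-x) := by
  have := Real.add_one_le_exp (-x); linarith

lemma aux_exp_quad {x : ℝ} (hx : 0 ≤ x) : Real.exp (-x) ≤ 1 - x + x^2/2 := by
  set g : ℝ → ℝ := fun y => 1 - y + y^2/2 - Real.exp (-y) with hgdef
  have hd : ∀ y : ℝ, HasDerivAt g (-1 + y + Real.exp (-y)) y := by
    intro y
    have h1 : HasDerivAt (fun y : ℝ => 1 - y) (-1) y := by
      simpa using (hasDerivAt_id y).const_sub 1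
    have h2 : HasDerivAt (fun y : ℝ => y^2/2) y y := by
      have := (hasDerivAt_pow 2 y).div_const 2
      simpa using this
    have h3 : HasDerivAt (fun y : ℝ => Real.exp (-y)) (-Real.exp (-y)) y := by
      have := ((hasDerivAt_id y).neg).exp
      simpa using this
    have := (h1.add h2).sub h3
    exact this.congr_deriv (by ring)
  have mono : MonotoneOn g (Ici 0) := by
    apply monotoneOn_of_deriv_nonneg (convex_Ici 0)
    · exact (Continuous.continuousOn (by fun_prop))
    · exact fun y _ => (hd y).differentiableAt.differentiableWithinAt
    · intro y hy
      rw [(hd y).deriv]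
      have := aux_one_sub_le_exp y
      linarith
  have h0 : g 0 ≤ g x := mono (self_mem_Ici) hx hx
  have : g 0 = 0 := by simp [hgdef]
  rw [this] at h0
  simp only [hgdef] at h0
  linarith

lemma aux_exp_cubic {x : ℝ} (hx : 0 ≤ x) : 1 - x + x^2/2 - x^3/6 ≤ Real.exp (-x) := by
  set g : ℝ → ℝ := fun y => Real.exp (-y) - (1 - y + y^2/2 - y^3/6) with hgdef
  have hd : ∀ y : ℝ, HasDerivAt g (-Real.exp (-y) + 1 - y + y^2/2) y := by
    intro y
    have h3 : HasDerivAt (fun y : ℝ => Real.exp (-y)) (-Real.exp (-y)) y := by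
      simpa using ((hasDerivAt_id y).neg).exp
    have h1 : HasDerivAt (fun y : ℝ => 1 - y) (-1) y := by
      simpa using (hasDerivAt_id y).const_sub 1
    have h2 : HasDerivAt (fun y : ℝ => y^2/2) y y := by
      simpa using (hasDerivAt_pow 2 y).div_const 2
    have h4 : HasDerivAt (fun y : ℝ => y^3/6) (y^2/2) y := by
      have := (hasDerivAt_pow 3 y).div_const 6
      exact this.congr_deriv (by push_cast; ring)
    have := h3.sub (((h1.add h2)).sub h4)
    exact this.congr_deriv (by ring)
  have mono : MonotoneOn g (Ici 0) := by
    apply monotoneOn_of_deriv_nonneg (convex_Ici 0)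
    · exact (Continuous.continuousOn (by fun_prop))
    · exact fun y _ => (hd y).differentiableAt.differentiableWithinAt
    · intro y hy
      rw [(hd y).deriv]
      rw [interior_Ici] at hy
      have := aux_exp_quad (le_of_lt hy)
      linarith
  have h0 : g 0 ≤ g x := mono (self_mem_Ici) hx hx
  have : g 0 = 0 := by simp [hgdef]
  rw [this] at h0
  simp only [hgdef] at h0
  linarith

lemma aux_int_Ioc_sub_left {a c : ℝ} (h : a ≤ c) :
    ∫ ρ in Ioc a c, (ρ - a) = (c - a)^2/2 := by
  rw [← intervalIntegral.integral_of_le h]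
  have hder : ∀ ρ ∈ uIcc a c, HasDerivAt (fun y => (y - a)^2/2) (ρ - a) ρ := by
    intro ρ _
    have := (((hasDerivAt_id ρ).sub_const a).pow 2).div_const 2
    exact this.congr_deriv (by simp only [id_eq]; push_cast; ring)
  rw [intervalIntegral.integral_eq_sub_of_hasDerivAt hder
    (Continuous.intervalIntegrable (by fun_prop) _ _)]
  ring

lemma aux_int_Ioc_sub_right {a c : ℝ} (h : a ≤ c) :
    ∫ ρ in Ioc a c, (c - ρ) = (c - a)^2/2 := by
  rw [← intervalIntegral.integral_of_le h]
  have hder : ∀ ρ ∈ uIcc a c, HasDerivAt (fun y => -((c - y)^2/2)) (c - ρ) ρ := by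
    intro ρ _
    have := ((((hasDerivAt_id ρ).const_sub c).pow 2).div_const 2).neg
    exact this.congr_deriv (by simp only [id_eq]; push_cast; ring)
  rw [intervalIntegral.integral_eq_sub_of_hasDerivAt hder
    (Continuous.intervalIntegrable (by fun_prop) _ _)]
  ring

lemma aux_int_Ioc_inv_sq {t : ℝ} (ht : 0 < t) :
    ∫ ρ in Ioc 0 (t/2), ((t - ρ)^2)⁻¹ = 1/t := by
  rw [← intervalIntegral.integral_of_le (by linarith)]
  have hne : ∀ ρ ∈ uIcc (0:ℝ) (t/2), t - ρ ≠ 0 := by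
    intro ρ hρ
    rw [uIcc_of_le (by linarith)] at hρ
    have := hρ.2
    intro hc; -- t = ρ
    have : ρ = t := by linarith
    linarith [this ▸ hρ.2]
  have hder : ∀ ρ ∈ uIcc (0:ℝ) (t/2), HasDerivAt (fun y => (t - y)⁻¹) (((t - ρ)^2)⁻¹) ρ := by
    intro ρ hρ
    have h1 : HasDerivAt (fun y : ℝ => t - y) (-1) ρ := by
      simpa using (hasDerivAt_id ρ).const_sub t
    have := h1.inv (hne ρ hρ)
    exact this.congr_deriv (by simp)
  have hcont : ContinuousOn (fun ρ : ℝ => ((t - ρ)^2)⁻¹) (uIcc (0:ℝ) (t/2)) := by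
    apply ContinuousOn.inv₀
    · fun_prop
    · intro ρ hρ; exact pow_ne_zero 2 (hne ρ hρ)
  rw [intervalIntegral.integral_eq_sub_of_hasDerivAt hder (hcont.intervalIntegrable)]
  have h1 : t - t/2 = t/2 := by ring
  rw [h1]
  field_simp
  ring_nf
  rw [mul_inv_cancel₀ ht.ne']; norm_num

section Swap

variable {E : Type*} [NormedAddCommGroup E] [NormedSpace ℝ E] [CompleteSpace E]

lemma aux_swapL (P : Measure ℝ) [IsFiniteMeasure P] {t : ℝ} (ht : 0 < t) (g : ℝ → E)
    (hg : Continuous g) (C : ℝ) (hC : ∀ ρ ∈ Ioc (0:ℝ) t, ‖g ρ‖ ≤ C) :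
    ((∫ s in Ico (0:ℝ) t, (∫ ρ in Ioc s t, g ρ) ∂P)
      = ∫ ρ in Ioc (0:ℝ) t, (P (Ico 0 ρ)).toReal • g ρ) ∧
    IntegrableOn (fun ρ => (P (Ico 0 ρ)).toReal • g ρ) (Ioc 0 t) := by
  have hC0 : 0 ≤ C := le_trans (norm_nonneg (g t)) (hC t ⟨ht, le_refl t⟩)
  set μ1 := P.restrict (Ico 0 t) with hμ1def
  set μ2 := volume.restrict (Ioc (0:ℝ) t) with hμ2def
  haveI : IsFiniteMeasure μ2 := by
    constructor
    rw [hμ2def, Measure.restrict_apply_univ]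
    simp [Real.volume_Ioc]
  set f : ℝ → ℝ → E := fun s ρ => ((Ioc s t).indicator g) ρ with hfdef
  have huncurry : uncurry f = ({p : ℝ × ℝ | p.1 < p.2 ∧ p.2 ≤ t}).indicator (fun p => g p.2) := by
    ext ⟨s, ρ⟩
    by_cases h : s < ρ ∧ ρ ≤ t <;>
      simp [hfdef, uncurry, indicator, Set.mem_Ioc, h, Set.mem_setOf_eq]
  have hsm : StronglyMeasurable (uncurry f) := by
    rw [huncurry]
    exact ((hg.comp continuous_snd).stronglyMeasurable).indicator
      ((measurableSet_lt measurable_fst measurable_snd).inter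
        (measurableSet_le measurable_snd measurable_const))
  have hrr : ∀ s : ℝ, 0 ≤ s → μ2.restrict (Ioc s t) = volume.restrict (Ioc s t) := by
    intro s hs
    rw [hμ2def, Measure.restrict_restrict measurableSet_Ioc,
      inter_eq_self_of_subset_left (Ioc_subset_Ioc_left hs)]
  have hae : ∀ᵐ p ∂(μ1.prod μ2), p.2 ∈ Ioc (0:ℝ) t := by
    rw [ae_iff]
    have hset : {p : ℝ × ℝ | ¬ p.2 ∈ Ioc (0:ℝ) t} = univ ×ˢ (Ioc (0:ℝ) t)ᶜ := by
      ext p; simp [Set.mem_prod]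
    rw [hset, Measure.prod_prod]
    simp [hμ2def, Measure.restrict_apply measurableSet_Ioc.compl]
  have hint : Integrable (uncurry f) (μ1.prod μ2) := by
    apply Integrable.mono' (integrable_const C) hsm.aestronglyMeasurable
    filter_upwards [hae] with p hp
    by_cases h : p.1 < p.2 ∧ p.2 ≤ t
    · calc ‖uncurry f p‖ = ‖g p.2‖ := by
            rw [huncurry]; simp [indicator_apply, Set.mem_setOf_eq, h]
        _ ≤ C := hC p.2 hp
    · rw [huncurry]; simp only [indicator_apply, Set.mem_setOf_eq, if_neg h]
      simpa using hC0
  have hpt : ∀ ρ ∈ Ioc (0:ℝ) t, (∫ s, f s ρ ∂μ1) = (P (Ico 0 ρ)).toReal • g ρ := by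
    intro ρ hρ
    have hfs : (fun s => f s ρ) = (Iio ρ).indicator (fun _ => g ρ) := by
      funext s
      by_cases h : s < ρ
      · have hm : ρ ∈ Ioc s t := ⟨h, hρ.2⟩
        show (Ioc s t).indicator g ρ = _
        rw [Set.indicator_of_mem hm, Set.indicator_of_mem (mem_Iio.mpr h)]
      · have hm : ¬ ρ ∈ Ioc s t := fun hc => h hc.1
        show (Ioc s t).indicator g ρ = _
        rw [Set.indicator_of_notMem hm, Set.indicator_of_notMem (by simpa using h)]
    rw [hfs, hμ1def, integral_indicator measurableSet_Iio,
      Measure.restrict_restrict measurableSet_Iio, integral_const,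
      measureReal_restrict_apply_univ]
    have hset2 : Iio ρ ∩ Ico 0 t = Ico 0 ρ := by
      ext s; simp only [mem_inter_iff, mem_Ico, mem_Iio]
      constructor
      · rintro ⟨h2, h0, _⟩; exact ⟨h0, h2⟩
      · rintro ⟨h0, h2⟩; exact ⟨h2, h0, lt_of_lt_of_le h2 hρ.2⟩
    rw [hset2]; rfl
  have hswap : (∫ s, ∫ ρ, f s ρ ∂μ2 ∂μ1) = ∫ ρ, ∫ s, f s ρ ∂μ1 ∂μ2 :=
    integral_integral_swap hint
  constructor
  · calc (∫ s in Ico (0:ℝ) t, (∫ ρ in Ioc s t, g ρ) ∂P)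
        = ∫ s, ∫ ρ, f s ρ ∂μ2 ∂μ1 := by
          rw [hμ1def]
          apply setIntegral_congr_fun measurableSet_Ico
          intro s hs
          show (∫ ρ in Ioc s t, g ρ) = ∫ ρ, (Ioc s t).indicator g ρ ∂μ2
          rw [integral_indicator measurableSet_Ioc, hrr s hs.1]
      _ = ∫ ρ, ∫ s, f s ρ ∂μ1 ∂μ2 := hswap
      _ = ∫ ρ in Ioc (0:ℝ) t, (P (Ico 0 ρ)).toReal • g ρ := by
          rw [hμ2def]
          exact setIntegral_congr_fun measurableSet_Ioc hpt
  · have h1 : Integrable (fun ρ => ∫ s, uncurry f (s, ρ) ∂μ1) μ2 := hint.integral_prod_right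
    apply (h1.congr _)
    filter_upwards [ae_restrict_mem measurableSet_Ioc] with ρ hρ
    exact hpt ρ hρ

lemma aux_swapU (P : Measure ℝ) [IsFiniteMeasure P] {t : ℝ} (g : ℝ → E)
    (hg : Continuous g) (C : ℝ) (hC0 : 0 ≤ C) (hC : ∀ ρ ∈ Ioi t, ‖g ρ‖ ≤ C * (ρ - t))
    (hP2 : Integrable (fun s => (s - t)^2) (P.restrict (Ici t))) :
    ((∫ s in Ici t, (∫ ρ in Ioc t s, g ρ) ∂P)
      = ∫ ρ in Ioi t, (P (Ici ρ)).toReal • g ρ) ∧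
    IntegrableOn (fun ρ => (P (Ici ρ)).toReal • g ρ) (Ioi t) := by
  set μ1 := P.restrict (Ici t) with hμ1def
  set μ2 := volume.restrict (Ioi t) with hμ2def
  set f : ℝ → ℝ → E := fun s ρ => ((Ioc t s).indicator g) ρ with hfdef
  have huncurry : uncurry f = ({p : ℝ × ℝ | t < p.2 ∧ p.2 ≤ p.1}).indicator (fun p => g p.2) := by
    ext ⟨s, ρ⟩
    by_cases h : t < ρ ∧ ρ ≤ s <;>
      simp [hfdef, uncurry, indicator, Set.mem_Ioc, h, Set.mem_setOf_eq]
  have hsm : StronglyMeasurable (uncurry f) := by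
    rw [huncurry]
    exact ((hg.comp continuous_snd).stronglyMeasurable).indicator
      ((measurableSet_lt measurable_const measurable_snd).inter
        (measurableSet_le measurable_snd measurable_fst))
  have hrr : ∀ s : ℝ, μ2.restrict (Ioc t s) = volume.restrict (Ioc t s) := by
    intro s
    rw [hμ2def, Measure.restrict_restrict measurableSet_Ioc,
      inter_eq_self_of_subset_left Ioc_subset_Ioi_self]
  have hrow : ∀ s : ℝ, Integrable (fun ρ => f s ρ) μ2 := by
    intro s
    have : Integrable ((Ioc t s).indicator g) μ2 := by
      rw [integrable_indicator_iff measurableSet_Ioc, IntegrableOn, hrr s]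
      exact hg.integrableOn_Ioc
    exact this
  have hint : Integrable (uncurry f) (μ1.prod μ2) := by
    rw [integrable_prod_iff hsm.aestronglyMeasurable]
    constructor
    · exact Filter.Eventually.of_forall hrow
    · apply Integrable.mono' (hP2.const_mul (C/2))
        ((hsm.norm.integral_prod_right').aestronglyMeasurable)
      filter_upwards [ae_restrict_mem measurableSet_Ici] with s hs
      have hnn : 0 ≤ ∫ ρ, ‖uncurry f (s, ρ)‖ ∂μ2 :=
        integral_nonneg fun ρ => norm_nonneg _
      rw [Real.norm_of_nonneg hnn]
      have hnormeq : (fun ρ => ‖uncurry f (s, ρ)‖)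
          = fun ρ => (Ioc t s).indicator (fun ρ => ‖g ρ‖) ρ := by
        funext ρ; exact norm_indicator_eq_indicator_norm _ _
      calc (∫ ρ, ‖uncurry f (s, ρ)‖ ∂μ2)
          = ∫ ρ in Ioc t s, ‖g ρ‖ := by
            rw [hnormeq, integral_indicator measurableSet_Ioc, hrr s]
        _ ≤ ∫ ρ in Ioc t s, C * (ρ - t) := by
            apply setIntegral_mono_on hg.norm.integrableOn_Ioc
              (Continuous.integrableOn_Ioc (by fun_prop)) measurableSet_Ioc
            intro ρ hρ
            exact hC ρ hρ.1
        _ = C * ((s - t)^2/2) := by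
            rw [integral_const_mul, aux_int_Ioc_sub_left hs]
        _ = C/2 * (s - t)^2 := by ring
  have hpt : ∀ ρ ∈ Ioi t, (∫ s, f s ρ ∂μ1) = (P (Ici ρ)).toReal • g ρ := by
    intro ρ hρ
    have hfs : (fun s => f s ρ) = (Ici ρ).indicator (fun _ => g ρ) := by
      funext s
      by_cases h : ρ ≤ s
      · have hm : ρ ∈ Ioc t s := ⟨hρ, h⟩
        show (Ioc t s).indicator g ρ = _
        rw [Set.indicator_of_mem hm, Set.indicator_of_mem (mem_Ici.mpr h)]
      · have hm : ¬ ρ ∈ Ioc t s := fun hc => h hc.2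
        show (Ioc t s).indicator g ρ = _
        rw [Set.indicator_of_notMem hm, Set.indicator_of_notMem (by simpa using h)]
    rw [hfs, hμ1def, integral_indicator measurableSet_Ici,
      Measure.restrict_restrict measurableSet_Ici, integral_const,
      measureReal_restrict_apply_univ,
      inter_eq_self_of_subset_left (Ici_subset_Ici.mpr (le_of_lt hρ))]; rfl
  have hswap : (∫ s, ∫ ρ, f s ρ ∂μ2 ∂μ1) = ∫ ρ, ∫ s, f s ρ ∂μ1 ∂μ2 :=
    integral_integral_swap hint
  constructor
  · calc (∫ s in Ici t, (∫ ρ in Ioc t s, g ρ) ∂P)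
        = ∫ s, ∫ ρ, f s ρ ∂μ2 ∂μ1 := by
          rw [hμ1def]
          apply setIntegral_congr_fun measurableSet_Ici
          intro s _
          show (∫ ρ in Ioc t s, g ρ) = ∫ ρ, (Ioc t s).indicator g ρ ∂μ2
          rw [integral_indicator measurableSet_Ioc, hrr s]
      _ = ∫ ρ, ∫ s, f s ρ ∂μ1 ∂μ2 := hswap
      _ = ∫ ρ in Ioi t, (P (Ici ρ)).toReal • g ρ := by
          rw [hμ2def]
          exact setIntegral_congr_fun measurableSet_Ioi hpt
  · have h1 : Integrable (fun ρ => ∫ s, uncurry f (s, ρ) ∂μ1) μ2 := hint.integral_prod_right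
    apply (h1.congr _)
    filter_upwards [ae_restrict_mem measurableSet_Ioi] with ρ hρ
    exact hpt ρ hρ

end Swap

section Moments

open Filter

set_option maxHeartbeats 2000000 in
lemma aux_moments (P : Measure ℝ) (b : ℝ) (hb : 0 ≤ b) (μ : Measure ℝ)
    (hμ1 : IntegrableOn (fun s : ℝ => s) (Ioi 0) μ)
    (hμ2 : IntegrableOn (fun s : ℝ => s ^ 2) (Ioi 0) μ)
    (hmom : b + ∫ s in Ioi (0:ℝ), s ∂μ = 1)
    {t : ℝ} (ht : 0 < t)
    (hsupp : P (Iio 0) = 0) (hsub : P univ ≤ 1)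
    (hLap : ∀ z : ℝ, 0 ≤ z →
      ∫ s, Real.exp (-(z*s)) ∂P
        = Real.exp (-(t * (b*z + ∫ s in Ioi 0, (1 - Real.exp (-(z*s))) ∂μ)))) :
    P univ = 1 ∧ Integrable (fun s => s) P ∧ (∫ s, s ∂P) = t ∧
      Integrable (fun s => (s - t)^2) P ∧
      (∫ s, (s - t)^2 ∂P) ≤ t * ∫ s in Ioi 0, s^2 ∂μ := by
  have hexple : ∀ x : ℝ, 0 ≤ x → Real.exp (-x) ≤ 1 := fun x hx => by
    rw [← Real.exp_zero]; exact Real.exp_le_exp.mpr (by linarith)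
  -- mass one
  have huniv : P univ = 1 := by
    have h0 := hLap 0 le_rfl
    have hI0 : (∫ s in Ioi (0:ℝ), (1 - Real.exp (-((0:ℝ)*s))) ∂μ) = 0 := by simp
    rw [hI0] at h0
    simp only [zero_mul, mul_zero, add_zero, neg_zero, Real.exp_zero] at h0
    have h1 : (P univ).toReal = 1 := by simp [integral_const] at h0; exact h0
    have hne : P univ ≠ ⊤ := ne_top_of_le_ne_top ENNReal.one_ne_top hsub
    have h2 := ENNReal.ofReal_toReal hne
    rw [h1] at h2
    simpa using h2.symm
  haveI : IsProbabilityMeasure P := ⟨huniv⟩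
  have haen : ∀ᵐ s ∂P, 0 ≤ s := by
    rw [ae_iff]
    have hs : {s : ℝ | ¬ 0 ≤ s} = Iio 0 := by ext s; simp [not_le]
    rw [hs]; exact hsupp
  set V := ∫ s in Ioi (0:ℝ), s^2 ∂μ with hVdef
  have hV0 : 0 ≤ V := setIntegral_nonneg measurableSet_Ioi (fun s _ => sq_nonneg s)
  set I : ℝ → ℝ := fun z => ∫ s in Ioi (0:ℝ), (1 - Real.exp (-(z*s))) ∂μ with hIdef
  set φ : ℝ → ℝ := fun z => b*z + I z with hφdef
  have hIapp : ∀ z : ℝ, I z = ∫ s in Ioi (0:ℝ), (1 - Real.exp (-(z*s))) ∂μ := fun z => rfl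
  have hφapp : ∀ z : ℝ, φ z = b*z + I z := fun z => rfl
  clear_value φ I
  have hμz : ∀ z : ℝ, 0 ≤ z → IntegrableOn (fun s => 1 - Real.exp (-(z*s))) (Ioi 0) μ := by
    intro z hz
    apply Integrable.mono' (hμ1.const_mul z) (Continuous.aestronglyMeasurable (by fun_prop))
    filter_upwards [ae_restrict_mem measurableSet_Ioi] with s hs
    have h0 : 0 ≤ z * s := mul_nonneg hz (le_of_lt hs)
    have h1 := hexple _ h0
    have h2 := aux_one_sub_le_exp (z*s)
    rw [Real.norm_eq_abs, _root_.abs_of_nonneg (by linarith)]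
    linarith
  have hφ_nonneg : ∀ z : ℝ, 0 ≤ z → 0 ≤ φ z := by
    intro z hz
    have hI : (0:ℝ) ≤ I z := by
      rw [hIapp]
      exact setIntegral_nonneg measurableSet_Ioi (fun s hs => by
        have := hexple (z*s) (mul_nonneg hz (le_of_lt hs)); linarith)
    have hbz : 0 ≤ b * z := mul_nonneg hb hz
    rw [hφapp]
    linarith
  have hμint : (∫ s in Ioi (0:ℝ), s ∂μ) = 1 - b := by linarith
  have hφ_le : ∀ z : ℝ, 0 ≤ z → φ z ≤ z := by
    intro z hz
    have h1 : I z ≤ ∫ s in Ioi (0:ℝ), z * s ∂μ := by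
      rw [hIapp]
      apply setIntegral_mono_on (hμz z hz) (hμ1.const_mul z) measurableSet_Ioi
      intro s hs
      have := aux_one_sub_le_exp (z*s); linarith
    rw [integral_const_mul, hμint] at h1
    rw [hφapp]
    nlinarith
  have hφ_low : ∀ z : ℝ, 0 ≤ z → z - φ z ≤ z^2/2 * V := by
    intro z hz
    have hkey : z - φ z = ∫ s in Ioi (0:ℝ), (z*s - (1 - Real.exp (-(z*s)))) ∂μ := by
      rw [integral_sub (hμ1.const_mul z) (hμz z hz), integral_const_mul, hμint]
      rw [hφapp, hIapp]
      ring
    have h2 : (∫ s in Ioi (0:ℝ), (z*s - (1 - Real.exp (-(z*s)))) ∂μ)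
        ≤ ∫ s in Ioi (0:ℝ), z^2/2 * s^2 ∂μ := by
      have hsub1 : IntegrableOn (fun s : ℝ => z*s - (1 - Real.exp (-(z*s)))) (Ioi 0) μ :=
        (hμ1.const_mul z).sub (hμz z hz)
      apply setIntegral_mono_on hsub1 (hμ2.const_mul (z^2/2)) measurableSet_Ioi
      intro s hs
      have hx : 0 ≤ z * s := mul_nonneg hz (le_of_lt hs)
      have := aux_exp_quad hx
      nlinarith
    rw [integral_const_mul] at h2
    rw [hkey]
    exact h2
  have hexpint : ∀ z : ℝ, 0 ≤ z → Integrable (fun s => Real.exp (-(z*s))) P := by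
    intro z hz
    apply Integrable.mono' (integrable_const (1:ℝ)) (Continuous.aestronglyMeasurable (by fun_prop))
    filter_upwards [haen] with s hs
    rw [Real.norm_eq_abs, _root_.abs_of_nonneg (Real.exp_pos _).le]
    exact hexple _ (mul_nonneg hz hs)
  have hIz : ∀ z : ℝ, 0 ≤ z →
      (∫ s, (1 - Real.exp (-(z*s))) ∂P) = 1 - Real.exp (-(t * φ z)) := by
    intro z hz
    rw [integral_sub (integrable_const 1) (hexpint z hz), hLap z hz]
    simp [hφapp, hIapp]
  -- approximating sequence
  clear_value V
  set zn : ℕ → ℝ := fun n => ((n:ℝ)+1)⁻¹ with hzndef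
  have hzn_pos : ∀ n, 0 < zn n := fun n => by positivity
  have hzn_to : Tendsto zn atTop (nhds 0) := by
    rw [hzndef]; simpa only [one_div] using tendsto_one_div_add_atTop_nhds_zero_nat (𝕜 := ℝ)
  clear_value zn
  set f : ℕ → ℝ → ℝ := fun n s => (1 - Real.exp (-(zn n * s))) / zn n with hfdef
  have hf_cont : ∀ n, Continuous (f n) := fun n => by fun_prop
  have hf_nonneg : ∀ n, ∀ s : ℝ, 0 ≤ s → 0 ≤ f n s := by
    intro n s hs
    have h1 := hexple (zn n * s) (mul_nonneg (hzn_pos n).le hs)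
    simp only [hfdef]
    apply div_nonneg (by linarith) (hzn_pos n).le
  have hf_le_s : ∀ n, ∀ s : ℝ, 0 ≤ s → f n s ≤ s := by
    intro n s hs
    have h2 := aux_one_sub_le_exp (zn n * s)
    simp only [hfdef]
    rw [div_le_iff₀ (hzn_pos n)]
    nlinarith
  have hf_ge : ∀ n, ∀ s : ℝ, 0 ≤ s → s - zn n * (s^2/2) ≤ f n s := by
    intro n s hs
    have hx : 0 ≤ zn n * s := mul_nonneg (hzn_pos n).le hs
    have h2 := aux_exp_quad hx
    simp only [hfdef]
    rw [le_div_iff₀ (hzn_pos n)]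
    nlinarith
  have hf_tend : ∀ s : ℝ, 0 ≤ s → Tendsto (fun n => f n s) atTop (nhds s) := by
    intro s hs
    apply tendsto_of_tendsto_of_tendsto_of_le_of_le
      (g := fun n => s - zn n * (s^2/2)) (h := fun _ => s)
    · have := Filter.Tendsto.const_sub s (hzn_to.mul_const (s^2/2))
      simpa using this
    · exact tendsto_const_nhds
    · exact fun n => hf_ge n s hs
    · exact fun n => hf_le_s n s hs
  have hf_int : ∀ n, Integrable (f n) P := by
    intro n
    apply Integrable.mono' (integrable_const ((zn n)⁻¹)) (hf_cont n).aestronglyMeasurable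
    filter_upwards [haen] with s hs
    have h1 := hexple (zn n * s) (mul_nonneg (hzn_pos n).le hs)
    have h2 := (Real.exp_pos (-(zn n * s))).le
    rw [Real.norm_eq_abs, _root_.abs_of_nonneg (hf_nonneg n s hs)]
    simp only [hfdef]
    rw [div_le_iff₀ (hzn_pos n), inv_mul_cancel₀ (ne_of_gt (hzn_pos n))]
    linarith
  have hf_eq : ∀ n, ∫ s, f n s ∂P = (1 - Real.exp (-(t * φ (zn n)))) / zn n := by
    intro n
    simp only [hfdef]
    rw [integral_div, hIz (zn n) (hzn_pos n).le]
  have hf_le_t : ∀ n, ∫ s, f n s ∂P ≤ t := by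
    intro n
    rw [hf_eq n]
    have hy : 0 ≤ t * φ (zn n) := mul_nonneg ht.le (hφ_nonneg _ (hzn_pos n).le)
    have h1 := aux_one_sub_le_exp (t * φ (zn n))
    have h2 := hφ_le (zn n) (hzn_pos n).le
    rw [div_le_iff₀ (hzn_pos n)]
    nlinarith
  -- integrability of the identity
  have hfatou : (∫⁻ s, ENNReal.ofReal s ∂P) ≤ ENNReal.ofReal t := by
    have hmeas : ∀ n, Measurable (fun s => ENNReal.ofReal (f n s)) :=
      fun n => ((hf_cont n).measurable).ennreal_ofReal
    have hlimae : ∀ᵐ s ∂P, ENNReal.ofReal s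
        = Filter.liminf (fun n => ENNReal.ofReal (f n s)) atTop := by
      filter_upwards [haen] with s hs
      exact ((ENNReal.tendsto_ofReal (hf_tend s hs)).liminf_eq).symm
    calc (∫⁻ s, ENNReal.ofReal s ∂P)
        = ∫⁻ s, Filter.liminf (fun n => ENNReal.ofReal (f n s)) atTop ∂P :=
          lintegral_congr_ae hlimae
      _ ≤ Filter.liminf (fun n => ∫⁻ s, ENNReal.ofReal (f n s) ∂P) atTop :=
          lintegral_liminf_le hmeas
      _ ≤ ENNReal.ofReal t := by
          have hbd : ∀ n, (∫⁻ s, ENNReal.ofReal (f n s) ∂P) ≤ ENNReal.ofReal t := by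
            intro n
            rw [← ofReal_integral_eq_lintegral_ofReal (hf_int n)
              (by filter_upwards [haen] with s hs; exact hf_nonneg n s hs)]
            exact ENNReal.ofReal_le_ofReal (hf_le_t n)
          calc Filter.liminf (fun n => ∫⁻ s, ENNReal.ofReal (f n s) ∂P) atTop
              ≤ Filter.liminf (fun _ => ENNReal.ofReal t) atTop :=
                Filter.liminf_le_liminf (Filter.Eventually.of_forall hbd)
            _ = ENNReal.ofReal t := Filter.liminf_const _
  have hid_int : Integrable (fun s : ℝ => s) P := by
    refine ⟨measurable_id.aestronglyMeasurable, ?_⟩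
    rw [hasFiniteIntegral_iff_norm]
    have hcong : (∫⁻ s, ENNReal.ofReal ‖(s:ℝ)‖ ∂P) = ∫⁻ s, ENNReal.ofReal s ∂P := by
      apply lintegral_congr_ae
      filter_upwards [haen] with s hs
      rw [Real.norm_of_nonneg hs]
    rw [hcong]
    exact lt_of_le_of_lt hfatou ENNReal.ofReal_lt_top
  -- the mean
  have hJ : Tendsto (fun n => I (zn n) / zn n) atTop (nhds (1 - b)) := by
    have heq : ∀ n, I (zn n) / zn n = ∫ s in Ioi (0:ℝ), f n s ∂μ := by
      intro n
      simp only [hfdef]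
      rw [hIapp, integral_div]
    have hdc : Tendsto (fun n => ∫ s in Ioi (0:ℝ), f n s ∂μ) atTop
        (nhds (∫ s in Ioi (0:ℝ), s ∂μ)) := by
      apply tendsto_integral_of_dominated_convergence (fun s => s)
        (fun n => (hf_cont n).aestronglyMeasurable) hμ1
      · intro n
        filter_upwards [ae_restrict_mem measurableSet_Ioi] with s hs
        rw [Real.norm_eq_abs, _root_.abs_of_nonneg (hf_nonneg n s hs.le)]
        exact hf_le_s n s hs.le
      · filter_upwards [ae_restrict_mem measurableSet_Ioi] with s hs
        exact hf_tend s hs.le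
    rw [hμint] at hdc
    exact Tendsto.congr (fun n => (heq n).symm) hdc
  set r : ℕ → ℝ :=
    fun n => (Real.exp (-(t * φ (zn n))) - 1 + t * φ (zn n)) / zn n with hrdef
  have hr_to : Tendsto r atTop (nhds 0) := by
    apply tendsto_of_tendsto_of_tendsto_of_le_of_le
      (g := fun _ => (0:ℝ)) (h := fun n => t^2/2 * zn n)
    · exact tendsto_const_nhds
    · have := hzn_to.const_mul (t^2/2)
      simpa using this
    · intro n
      have hy : 0 ≤ t * φ (zn n) := mul_nonneg ht.le (hφ_nonneg _ (hzn_pos n).le)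
      have h1 := aux_one_sub_le_exp (t * φ (zn n))
      simp only [hrdef]
      apply div_nonneg (by linarith) (hzn_pos n).le
    · intro n
      have hy : 0 ≤ t * φ (zn n) := mul_nonneg ht.le (hφ_nonneg _ (hzn_pos n).le)
      have h1 := aux_exp_quad hy
      have h2 := hφ_le (zn n) (hzn_pos n).le
      have h3 := hzn_pos n
      simp only [hrdef]
      rw [div_le_iff₀ h3]
      have h4 : t * φ (zn n) ≤ t * zn n := mul_le_mul_of_nonneg_left h2 ht.le
      have h5 : (t * φ (zn n))^2 ≤ t^2 * zn n * zn n := by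
        nlinarith [mul_nonneg (sub_nonneg.mpr h4) (by linarith : (0:ℝ) ≤ t * zn n + t * φ (zn n))]
      linarith
  have hseq : ∀ n, ∫ s, f n s ∂P = t*b + t * (I (zn n) / zn n) - r n := by
    intro n
    rw [hf_eq n]
    have hzne : zn n ≠ 0 := ne_of_gt (hzn_pos n)
    have expand : t * φ (zn n) = t*b*zn n + t*I (zn n) := by
      rw [hφapp]; ring
    simp only [hrdef, expand]
    field_simp
    ring
  have hmean_seq : Tendsto (fun n => ∫ s, f n s ∂P) atTop (nhds t) := by
    have h := ((hJ.const_mul t).const_add (t*b)).sub hr_to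
    have heqlim : t*b + t*(1-b) - 0 = t := by ring
    rw [heqlim] at h
    exact Tendsto.congr (fun n => (hseq n).symm) h
  have hmean_int : Tendsto (fun n => ∫ s, f n s ∂P) atTop (nhds (∫ s, s ∂P)) := by
    apply tendsto_integral_of_dominated_convergence (fun s => |s|)
      (fun n => (hf_cont n).aestronglyMeasurable) hid_int.abs
    · intro n
      filter_upwards [haen] with s hs
      rw [Real.norm_eq_abs, _root_.abs_of_nonneg (hf_nonneg n s hs), _root_.abs_of_nonneg hs]
      exact hf_le_s n s hs
    · filter_upwards [haen] with s hs
      exact hf_tend s hs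
  have hmean : (∫ s, s ∂P) = t := tendsto_nhds_unique hmean_int hmean_seq
  -- second moment
  set g : ℕ → ℝ → ℝ :=
    fun n s => 2*(Real.exp (-(zn n * s)) - 1 + zn n * s) / (zn n)^2 with hgdef
  have hg_cont : ∀ n, Continuous (g n) := fun n => by fun_prop
  have hg_nonneg : ∀ n, ∀ s : ℝ, 0 ≤ s → 0 ≤ g n s := by
    intro n s hs
    have h1 := aux_one_sub_le_exp (zn n * s)
    simp only [hgdef]
    apply div_nonneg (by linarith) (sq_nonneg _)
  have hg_le_sq : ∀ n, ∀ s : ℝ, 0 ≤ s → g n s ≤ s^2 := by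
    intro n s hs
    have hx : 0 ≤ zn n * s := mul_nonneg (hzn_pos n).le hs
    have h1 := aux_exp_quad hx
    simp only [hgdef]
    rw [div_le_iff₀ (pow_pos (hzn_pos n) 2)]
    nlinarith
  have hg_ge : ∀ n, ∀ s : ℝ, 0 ≤ s → s^2 - zn n * (s^3/3) ≤ g n s := by
    intro n s hs
    have hx : 0 ≤ zn n * s := mul_nonneg (hzn_pos n).le hs
    have h1 := aux_exp_cubic hx
    simp only [hgdef]
    rw [le_div_iff₀ (pow_pos (hzn_pos n) 2)]
    nlinarith
  have hg_tend : ∀ s : ℝ, 0 ≤ s → Tendsto (fun n => g n s) atTop (nhds (s^2)) := by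
    intro s hs
    apply tendsto_of_tendsto_of_tendsto_of_le_of_le
      (g := fun n => s^2 - zn n * (s^3/3)) (h := fun _ => s^2)
    · have := Filter.Tendsto.const_sub (s^2) (hzn_to.mul_const (s^3/3))
      simpa using this
    · exact tendsto_const_nhds
    · exact fun n => hg_ge n s hs
    · exact fun n => hg_le_sq n s hs
  have hg_int : ∀ n, Integrable (g n) P := by
    intro n
    apply Integrable.mono' (hid_int.const_mul (2/zn n)) (hg_cont n).aestronglyMeasurable
    filter_upwards [haen] with s hs
    have h1 := hexple (zn n * s) (mul_nonneg (hzn_pos n).le hs)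
    have hzp := hzn_pos n
    rw [Real.norm_eq_abs, _root_.abs_of_nonneg (hg_nonneg n s hs)]
    simp only [hgdef]
    rw [div_le_iff₀ (pow_pos hzp 2)]
    have hexpand : 2/zn n * s * (zn n)^2 = 2*s*zn n := by
      field_simp
    rw [hexpand]
    nlinarith
  have hg_eq : ∀ n, ∫ s, g n s ∂P
      = 2*(Real.exp (-(t * φ (zn n))) - 1 + zn n * t) / (zn n)^2 := by
    intro n
    have hrw : (fun s => g n s)
        = fun s => (2/(zn n)^2) * ((Real.exp (-(zn n * s)) - 1) + zn n * s) := by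
      funext s; simp only [hgdef]; ring
    have e1 : Integrable (fun s : ℝ => Real.exp (-(zn n * s)) - 1) P :=
      (hexpint (zn n) (hzn_pos n).le).sub (integrable_const 1)
    rw [hrw, integral_const_mul,
      integral_add e1 (hid_int.const_mul (zn n)),
      integral_sub (hexpint (zn n) (hzn_pos n).le) (integrable_const 1),
      hLap (zn n) (hzn_pos n).le, integral_const_mul, hmean]
    have h1P : (∫ s, (1:ℝ) ∂P) = 1 := by simp
    rw [h1P]
    rw [hφapp, hIapp]
    ring
  have hg_le_t : ∀ n, ∫ s, g n s ∂P ≤ t^2 + t*V := by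
    intro n
    rw [hg_eq n]
    have hy : 0 ≤ t * φ (zn n) := mul_nonneg ht.le (hφ_nonneg _ (hzn_pos n).le)
    have hyle : t * φ (zn n) ≤ t * zn n :=
      mul_le_mul_of_nonneg_left (hφ_le (zn n) (hzn_pos n).le) ht.le
    have ha := aux_exp_quad hy
    have hc : t * (zn n - φ (zn n)) ≤ t * ((zn n)^2/2 * V) :=
      mul_le_mul_of_nonneg_left (hφ_low _ (hzn_pos n).le) ht.le
    have hd : (t * φ (zn n))^2 ≤ t^2*(zn n)^2 := by
      nlinarith [mul_nonneg (sub_nonneg.mpr hyle) (by linarith : (0:ℝ) ≤ t * zn n + t * φ (zn n))]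
    rw [div_le_iff₀ (pow_pos (hzn_pos n) 2)]
    linarith [ha, hc, hd]
  have hsqfatou : (∫⁻ s, ENNReal.ofReal (s^2) ∂P) ≤ ENNReal.ofReal (t^2 + t*V) := by
    have hmeas : ∀ n, Measurable (fun s => ENNReal.ofReal (g n s)) :=
      fun n => ((hg_cont n).measurable).ennreal_ofReal
    have hlimae : ∀ᵐ s ∂P, ENNReal.ofReal (s^2)
        = Filter.liminf (fun n => ENNReal.ofReal (g n s)) atTop := by
      filter_upwards [haen] with s hs
      exact ((ENNReal.tendsto_ofReal (hg_tend s hs)).liminf_eq).symm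
    calc (∫⁻ s, ENNReal.ofReal (s^2) ∂P)
        = ∫⁻ s, Filter.liminf (fun n => ENNReal.ofReal (g n s)) atTop ∂P :=
          lintegral_congr_ae hlimae
      _ ≤ Filter.liminf (fun n => ∫⁻ s, ENNReal.ofReal (g n s) ∂P) atTop :=
          lintegral_liminf_le hmeas
      _ ≤ ENNReal.ofReal (t^2 + t*V) := by
          have hbd : ∀ n, (∫⁻ s, ENNReal.ofReal (g n s) ∂P)
              ≤ ENNReal.ofReal (t^2 + t*V) := by
            intro n
            rw [← ofReal_integral_eq_lintegral_ofReal (hg_int n)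
              (by filter_upwards [haen] with s hs; exact hg_nonneg n s hs)]
            exact ENNReal.ofReal_le_ofReal (hg_le_t n)
          calc Filter.liminf (fun n => ∫⁻ s, ENNReal.ofReal (g n s) ∂P) atTop
              ≤ Filter.liminf (fun _ => ENNReal.ofReal (t^2 + t*V)) atTop :=
                Filter.liminf_le_liminf (Filter.Eventually.of_forall hbd)
            _ = ENNReal.ofReal (t^2 + t*V) := Filter.liminf_const _
  have hsq_int : Integrable (fun s : ℝ => s^2) P := by
    refine ⟨(by fun_prop : Continuous fun s : ℝ => s^2).aestronglyMeasurable, ?_⟩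
    rw [hasFiniteIntegral_iff_norm]
    have hcong : (∫⁻ s, ENNReal.ofReal ‖s^2‖ ∂P) = ∫⁻ s, ENNReal.ofReal (s^2) ∂P :=
      lintegral_congr fun s => by rw [Real.norm_of_nonneg (sq_nonneg s)]
    rw [hcong]
    exact lt_of_le_of_lt hsqfatou ENNReal.ofReal_lt_top
  have hsq_le : (∫ s, s^2 ∂P) ≤ t^2 + t*V := by
    rw [integral_eq_lintegral_of_nonneg_ae
      (Filter.Eventually.of_forall fun s => sq_nonneg s) hsq_int.aestronglyMeasurable]
    have hnn : (0:ℝ) ≤ t^2 + t*V := by nlinarith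
    have := ENNReal.toReal_mono ENNReal.ofReal_ne_top hsqfatou
    rwa [ENNReal.toReal_ofReal hnn] at this
  have hexpand : (fun s : ℝ => (s - t)^2) = fun s => s^2 - (2*t)*s + t^2 := by
    funext s; ring
  have hK_int : Integrable (fun s => (s - t)^2) P := by
    rw [hexpand]
    exact (hsq_int.sub (hid_int.const_mul (2*t))).add (integrable_const _)
  have hK_le : (∫ s, (s - t)^2 ∂P) ≤ t * V := by
    have hval : (∫ s, (s - t)^2 ∂P) = (∫ s, s^2 ∂P) - (2*t)*t + t^2 := by
      have e2 : Integrable (fun s : ℝ => s^2 - (2*t)*s) P :=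
        hsq_int.sub (hid_int.const_mul (2*t))
      rw [hexpand,
        integral_add e2 (integrable_const _),
        integral_sub hsq_int (hid_int.const_mul (2*t)), integral_const_mul, hmean,
        integral_const]
      simp
    rw [hval]
    linarith
  exact ⟨huniv, hid_int, hmean, hK_int, hK_le⟩

end Moments

end AuxiliaryLemmas

set_option maxHeartbeats 4000000

/-- Theorem 6.4: for a bounded analytic `C₀`-semigroup `T` (encoded by `‖T(t)‖ ≤ M₀`,
`D(t) = A T(t)` with `d/dt T(t)x = -D(t)x` and `t‖D(t)‖ ≤ M₁`), `φ ∈ Φ` with Lévy data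
`(b, μ)` and `σ² = ∫ s² dμ`, subordination measures `ν_t`, and `x ∈ dom(A)` (witnessed by
`u = Ax`), one has `‖T(t)x - e^(-tφ(A))x‖ ≤ (2M₀ + M₁) σ² ‖u‖` for all `t > 0`. -/
theorem statement12 {X : Type*} [NormedAddCommGroup X] [NormedSpace ℂ X] [CompleteSpace X]
    (T : ℝ → X →L[ℂ] X) (M₀ M₁ : ℝ)
    (hT0 : T 0 = 1)
    (hTadd : ∀ s t : ℝ, 0 ≤ s → 0 ≤ t → T (s + t) = (T s).comp (T t))
    (hTcont : ∀ x : X, ContinuousOn (fun t => T t x) (Ici 0))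
    (hM0 : ∀ t : ℝ, 0 ≤ t → ‖T t‖ ≤ M₀)
    (D : ℝ → X →L[ℂ] X)
    (hD : ∀ x : X, ∀ t : ℝ, 0 < t → HasDerivAt (fun r => T r x) (-(D t x)) t)
    (hM1 : ∀ t : ℝ, 0 < t → t * ‖D t‖ ≤ M₁)
    (b : ℝ) (hb : 0 ≤ b) (μ : Measure ℝ)
    (hμ1 : IntegrableOn (fun s : ℝ => s) (Ioi 0) μ)
    (hμ2 : IntegrableOn (fun s : ℝ => s ^ 2) (Ioi 0) μ)
    (hmom : b + ∫ s in Ioi (0:ℝ), s ∂μ = 1)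
    (ν : ℝ → Measure ℝ)
    (hνsupp : ∀ r : ℝ, 0 ≤ r → (ν r) (Iio 0) = 0)
    (hνsub : ∀ r : ℝ, 0 ≤ r → (ν r) univ ≤ 1)
    (hνL : ∀ r : ℝ, 0 ≤ r → ∀ z : ℂ, 0 ≤ z.re →
      (∫ s in Ici (0:ℝ), Complex.exp (-z * s) ∂ν r) =
        Complex.exp (-(r:ℂ) *
          ((b:ℂ) * z + ∫ s in Ioi (0:ℝ), (1 - Complex.exp (-z * s)) ∂μ)))
    (t : ℝ) (ht : 0 < t) (x u : X)
    (hxu : ∀ r : ℝ, 0 ≤ r → T r x = x - ∫ ρ in (0:ℝ)..r, T ρ u) :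
    ‖T t x - ∫ s in Ici (0:ℝ), T s x ∂ν t‖ ≤
      (2 * M₀ + M₁) * (∫ s in Ioi (0:ℝ), s ^ 2 ∂μ) * ‖u‖ := by
  have hM0nn : 0 ≤ M₀ := le_trans (norm_nonneg _) (hM0 0 le_rfl)
  have hM1nn : 0 ≤ M₁ := le_trans (by positivity) (hM1 1 one_pos)
  set P := ν t with hPdef
  have hν0 : P (Iio 0) = 0 := hνsupp t ht.le
  have hνu : P univ ≤ 1 := hνsub t ht.le
  have haemem : ∀ᵐ s ∂P, s ∈ Ici (0:ℝ) := by
    rw [ae_iff]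
    have hset : {s : ℝ | ¬ s ∈ Ici (0:ℝ)} = Iio 0 := by ext s; simp [not_le]
    rw [hset]; exact hν0
  have hres : P.restrict (Ici 0) = P := Measure.restrict_eq_self_of_ae_mem haemem
  -- real Laplace transform identity
  have hLapR : ∀ z : ℝ, 0 ≤ z → ∫ s, Real.exp (-(z*s)) ∂P
      = Real.exp (-(t * (b*z + ∫ s in Ioi 0, (1 - Real.exp (-(z*s))) ∂μ))) := by
    intro z hz
    have h := hνL t ht.le (z:ℂ) (by simpa using hz)
    rw [hres] at h
    have e1 : ∀ s : ℝ, Complex.exp (-(z:ℂ) * (s:ℂ)) = ((Real.exp (-(z*s)) : ℝ) : ℂ) := by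
      intro s
      have harg : -(z:ℂ) * (s:ℂ) = ((-(z*s) : ℝ) : ℂ) := by push_cast; ring
      rw [harg, ← Complex.ofReal_exp]
    simp only [e1] at h
    have e2 : ∀ s : ℝ, (1:ℂ) - ((Real.exp (-(z*s)) : ℝ) : ℂ)
        = ((1 - Real.exp (-(z*s)) : ℝ) : ℂ) := fun s => by push_cast; ring
    simp only [e2] at h
    have hpull1 : (∫ s, ((Real.exp (-(z*s)) : ℝ) : ℂ) ∂P)
        = ((∫ s, Real.exp (-(z*s)) ∂P : ℝ) : ℂ) := integral_ofReal
    have hpull2 : (∫ s in Ioi (0:ℝ), ((1 - Real.exp (-(z*s)) : ℝ) : ℂ) ∂μ)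
        = ((∫ s in Ioi (0:ℝ), (1 - Real.exp (-(z*s))) ∂μ : ℝ) : ℂ) := integral_ofReal
    rw [hpull1, hpull2] at h
    set X : ℝ := ∫ s in Ioi (0:ℝ), (1 - Real.exp (-(z*s))) ∂μ with hXdef
    have harg2 : -(t:ℂ) * ((b:ℂ) * (z:ℂ) + ((X:ℝ):ℂ)) = ((-(t*(b*z+X)) : ℝ) : ℂ) := by
      push_cast; ring
    rw [harg2, ← Complex.ofReal_exp] at h
    exact_mod_cast h
  obtain ⟨huniv, hid_int, hmean, hK_int, hK_le⟩ :=
    aux_moments P b hb μ hμ1 hμ2 hmom ht hν0 hνu hLapR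
  haveI : IsProbabilityMeasure P := ⟨huniv⟩
  set V := ∫ s in Ioi (0:ℝ), s^2 ∂μ with hVdef
  have hV0 : 0 ≤ V := setIntegral_nonneg measurableSet_Ioi fun s _ => sq_nonneg s
  set K := ∫ s, (s - t)^2 ∂P with hKdef
  have hK0 : 0 ≤ K := integral_nonneg fun s => sq_nonneg _
  -- Chebyshev
  have hcheb : ∀ ρ : ℝ, ρ < t → (P (Iic ρ)).toReal * (t - ρ)^2 ≤ K := by
    intro ρ hρ
    have h1 : (P (Iic ρ)).toReal * (t - ρ)^2 = ∫ s in Iic ρ, (t - ρ)^2 ∂P := by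
      rw [setIntegral_const, smul_eq_mul]; rfl
    rw [h1]
    calc (∫ s in Iic ρ, (t-ρ)^2 ∂P) ≤ ∫ s in Iic ρ, (s-t)^2 ∂P := by
          apply setIntegral_mono_on
            (integrableOn_const (measure_ne_top P _))
            hK_int.integrableOn measurableSet_Iic
          intro s hs
          have h2 : t - ρ ≤ t - s := by linarith [mem_Iic.mp hs]
          have h3 : 0 < t - ρ := by linarith
          nlinarith
      _ ≤ K := by
          rw [hKdef]
          exact setIntegral_le_integral hK_int
            (by filter_upwards with s using sq_nonneg _)
  -- semigroup bounds
  have hTu_bound : ∀ s : ℝ, 0 ≤ s → ‖T s u‖ ≤ M₀ * ‖u‖ := fun s hs =>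
    le_trans ((T s).le_opNorm u) (mul_le_mul_of_nonneg_right (hM0 s hs) (norm_nonneg u))
  set S : ℝ → X := fun s => T (max s 0) x with hSdef
  have hScont : Continuous S := by
    rw [hSdef]
    exact (hTcont x).comp_continuous (continuous_id.max continuous_const)
      (fun s => mem_Ici.mpr (le_max_right s 0))
  have hSeq : ∀ s : ℝ, 0 ≤ s → S s = T s x := fun s hs => by
    simp only [hSdef]; rw [max_eq_left hs]
  set G : ℝ → X := fun ρ => T (max ρ 0) u - T t u with hGdef
  have hGcont : Continuous G := by
    rw [hGdef]
    exact ((hTcont u).comp_continuous (continuous_id.max continuous_const)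
      (fun s => mem_Ici.mpr (le_max_right s 0))).sub continuous_const
  have hGeq : ∀ ρ : ℝ, 0 ≤ ρ → G ρ = T ρ u - T t u := fun ρ hρ => by
    simp only [hGdef]; rw [max_eq_left hρ]
  have hG2M : ∀ ρ : ℝ, ‖G ρ‖ ≤ 2*M₀*‖u‖ := by
    intro ρ
    simp only [hGdef]
    calc ‖T (max ρ 0) u - T t u‖ ≤ ‖T (max ρ 0) u‖ + ‖T t u‖ := norm_sub_le _ _
      _ ≤ M₀*‖u‖ + M₀*‖u‖ :=
          add_le_add (hTu_bound _ (le_max_right _ _)) (hTu_bound _ ht.le)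
      _ = 2*M₀*‖u‖ := by ring
  have hMVT : ∀ a c : ℝ, 0 < a → a ≤ c → ‖T c u - T a u‖ ≤ (M₁ * ‖u‖ / a) * (c - a) := by
    intro a c ha hac
    have hD' : ∀ ρ ∈ Icc a c, HasDerivWithinAt (fun r => T r u) (-(D ρ u)) (Icc a c) ρ :=
      fun ρ hρ => (hD u ρ (lt_of_lt_of_le ha hρ.1)).hasDerivWithinAt
    have hbound : ∀ ρ ∈ Icc a c, ‖-(D ρ u)‖ ≤ M₁ * ‖u‖ / a := by
      intro ρ hρ
      have hρ0 : 0 < ρ := lt_of_lt_of_le ha hρ.1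
      rw [norm_neg]
      have h1 : ‖D ρ u‖ ≤ ‖D ρ‖ * ‖u‖ := (D ρ).le_opNorm u
      have h2 : ‖D ρ‖ ≤ M₁ / ρ := by
        rw [le_div_iff₀ hρ0, mul_comm]; exact hM1 ρ hρ0
      have h3 : M₁ / ρ ≤ M₁ / a := by
        rw [div_eq_mul_inv, div_eq_mul_inv]
        exact mul_le_mul_of_nonneg_left (inv_anti₀ ha hρ.1) hM1nn
      calc ‖D ρ u‖ ≤ ‖D ρ‖ * ‖u‖ := h1
        _ ≤ (M₁ / ρ) * ‖u‖ := mul_le_mul_of_nonneg_right h2 (norm_nonneg u)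
        _ ≤ (M₁ / a) * ‖u‖ := mul_le_mul_of_nonneg_right h3 (norm_nonneg u)
        _ = M₁ * ‖u‖ / a := by ring
    have hkey := Convex.norm_image_sub_le_of_norm_hasDerivWithin_le hD' hbound
      (convex_Icc a c) (left_mem_Icc.mpr hac) (right_mem_Icc.mpr hac)
    rw [Real.norm_eq_abs, _root_.abs_of_nonneg (sub_nonneg.mpr hac)] at hkey
    exact hkey
  have hGup : ∀ ρ ∈ Ioi t, ‖G ρ‖ ≤ (2*M₁*‖u‖/t) * (ρ - t) := by
    intro ρ hρ
    have hρt : t < ρ := mem_Ioi.mp hρ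
    rw [hGeq ρ (by linarith)]
    calc ‖T ρ u - T t u‖ ≤ (M₁*‖u‖/t)*(ρ-t) := hMVT t ρ ht hρt.le
      _ ≤ (2*M₁*‖u‖/t)*(ρ-t) := by
          apply mul_le_mul_of_nonneg_right _ (by linarith : (0:ℝ) ≤ ρ - t)
          apply (div_le_div_iff_of_pos_right ht).mpr
          nlinarith [norm_nonneg u]
  have hGlow : ∀ ρ : ℝ, t/2 < ρ → ρ ≤ t → ‖G ρ‖ ≤ (2*M₁*‖u‖/t) * (t - ρ) := by
    intro ρ h1 h2
    have hρ0 : 0 < ρ := by linarith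
    rw [hGeq ρ hρ0.le, norm_sub_rev]
    calc ‖T t u - T ρ u‖ ≤ (M₁*‖u‖/ρ)*(t - ρ) := hMVT ρ t hρ0 h2
      _ ≤ (2*M₁*‖u‖/t)*(t-ρ) := by
          apply mul_le_mul_of_nonneg_right _ (by linarith : (0:ℝ) ≤ t - ρ)
          rw [div_le_div_iff₀ hρ0 ht]
          nlinarith [norm_nonneg u, mul_nonneg (mul_nonneg hM1nn (norm_nonneg u)) (by linarith : (0:ℝ) ≤ 2*ρ - t)]
  -- integral identities
  have hSint : Integrable S P := by
    apply Integrable.mono' (integrable_const (M₀*‖x‖)) hScont.aestronglyMeasurable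
    filter_upwards with s
    simp only [hSdef]
    exact le_trans ((T _).le_opNorm x)
      (mul_le_mul_of_nonneg_right (hM0 _ (le_max_right _ _)) (norm_nonneg x))
  have hgoal_int : (∫ s in Ici (0:ℝ), T s x ∂P) = ∫ s, S s ∂P := by
    rw [hres]
    exact integral_congr_ae
      (by filter_upwards [haemem] with s hs; exact (hSeq s hs).symm)
  have huIcc : ∀ s : ℝ, 0 ≤ s → uIcc t s ⊆ Ici 0 := by
    intro s hs ρ hρ
    have := hρ.1
    exact mem_Ici.mpr (le_trans (le_inf ht.le hs) this)
  have hC_step : ∀ s : ℝ, 0 ≤ s → T t x - T s x = ∫ ρ in t..s, T ρ u := by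
    intro s hs
    have hi1 : IntervalIntegrable (fun ρ => T ρ u) volume 0 t := by
      apply ContinuousOn.intervalIntegrable
      apply (hTcont u).mono
      rw [uIcc_of_le ht.le]
      exact Icc_subset_Ici_self
    have hi2 : IntervalIntegrable (fun ρ => T ρ u) volume t s := by
      apply ContinuousOn.intervalIntegrable
      exact (hTcont u).mono (huIcc s hs)
    have hadd := intervalIntegral.integral_add_adjacent_intervals hi1 hi2
    rw [hxu t ht.le, hxu s hs, ← hadd]
    abel
  set Φ : ℝ → X := fun s => ∫ ρ in t..s, G ρ with hΦdef
  have hGi : ∀ a c : ℝ, IntervalIntegrable G volume a c :=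
    fun a c => hGcont.intervalIntegrable a c
  have hΦcont : Continuous Φ := by
    rw [hΦdef]
    exact intervalIntegral.continuous_primitive (fun a c => hGi a c) t
  have hstep2 : ∀ s : ℝ, 0 ≤ s → T t x - S s = (s - t) • T t u + Φ s := by
    intro s hs
    rw [hSeq s hs, hC_step s hs]
    simp only [hΦdef]
    have hcong : (∫ ρ in t..s, T ρ u) = ∫ ρ in t..s, (T t u + G ρ) := by
      apply intervalIntegral.integral_congr
      intro ρ hρ
      show T ρ u = T t u + G ρ
      rw [hGeq ρ (mem_Ici.mp (huIcc s hs hρ))]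
      abel
    rw [hcong, intervalIntegral.integral_add (intervalIntegrable_const) (hGi t s),
      intervalIntegral.integral_const]
  have hΦint : Integrable Φ P := by
    apply Integrable.mono' (((hid_int.sub (integrable_const t)).abs).const_mul (2*M₀*‖u‖))
      hΦcont.aestronglyMeasurable
    filter_upwards with s
    simp only [hΦdef]
    calc ‖∫ ρ in t..s, G ρ‖ ≤ 2*M₀*‖u‖ * |s - t| :=
        intervalIntegral.norm_integral_le_of_norm_le_const (fun ρ _ => hG2M ρ)
      _ = 2*M₀*‖u‖ * |(fun s => s - t) s| := rfl
  have hlin_int : Integrable (fun s => (s - t) • T t u) P :=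
    (hid_int.sub (integrable_const t)).smul_const (T t u)
  have hmean0 : (∫ s, (s - t) ∂P) = 0 := by
    rw [integral_sub hid_int (integrable_const t), hmean, integral_const]
    simp
  have hdecomp : T t x - ∫ s, S s ∂P = ∫ s, Φ s ∂P := by
    have h1 : (∫ s, (T t x - S s) ∂P) = T t x - ∫ s, S s ∂P := by
      rw [integral_sub (integrable_const (T t x)) hSint, integral_const]
      simp
    rw [← h1]
    calc (∫ s, (T t x - S s) ∂P)
        = ∫ s, ((s - t) • T t u + Φ s) ∂P := integral_congr_ae
          (by filter_upwards [haemem] with s hs; exact hstep2 s (mem_Ici.mp hs))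
      _ = (∫ s, (s - t) ∂P) • T t u + ∫ s, Φ s ∂P := by
          rw [integral_add hlin_int hΦint, integral_smul_const]
      _ = ∫ s, Φ s ∂P := by rw [hmean0]; simp
  have hsplit : (∫ s, Φ s ∂P) = (∫ s in Iio t, Φ s ∂P) + ∫ s in Ici t, Φ s ∂P := by
    have h := integral_add_compl (measurableSet_Ici (a := t)) hΦint
    rw [compl_Ici] at h
    rw [← h]; abel
  have hIio : (∫ s in Iio t, Φ s ∂P) = ∫ s in Ico 0 t, Φ s ∂P := by
    apply setIntegral_congr_set
    rw [MeasureTheory.ae_eq_set]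
    constructor
    · apply measure_mono_null _ hν0
      intro s hs
      simp only [mem_diff, mem_Iio, mem_Ico, not_and, not_lt] at hs
      by_contra hc
      simp only [mem_Iio, not_lt] at hc
      exact absurd (hs.2 hc) (not_le.mpr hs.1)
    · have hsub2 : Ico 0 t \ Iio t = ∅ := by
        ext s; simp only [mem_diff, mem_Ico, mem_Iio, mem_empty_iff_false, iff_false]
        rintro ⟨⟨_, h2⟩, h3⟩; exact h3 h2
      rw [hsub2]; simp
  have hIcoΦ : (∫ s in Ico 0 t, Φ s ∂P)
      = - ∫ s in Ico 0 t, (∫ ρ in Ioc s t, G ρ) ∂P := by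
    rw [← integral_neg]
    apply setIntegral_congr_fun measurableSet_Ico
    intro s hs
    simp only [hΦdef]
    rw [intervalIntegral.integral_symm, intervalIntegral.integral_of_le hs.2.le]
  have hIciΦ : (∫ s in Ici t, Φ s ∂P)
      = ∫ s in Ici t, (∫ ρ in Ioc t s, G ρ) ∂P := by
    apply setIntegral_congr_fun measurableSet_Ici
    intro s hs
    simp only [hΦdef]
    rw [intervalIntegral.integral_of_le (mem_Ici.mp hs)]
  obtain ⟨hswL, hintL⟩ := aux_swapL P ht G hGcont (2*M₀*‖u‖) (fun ρ _ => hG2M ρ)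
  obtain ⟨hswU, hintU⟩ := aux_swapU P (t := t) G hGcont (2*M₁*‖u‖/t)
    (by positivity) hGup hK_int.restrict
  obtain ⟨hswLs, hintLs⟩ := aux_swapL P ht (fun ρ => t - ρ) (by fun_prop) t
    (fun ρ hρ => by
      rw [Real.norm_eq_abs, _root_.abs_of_nonneg (by linarith [hρ.2] : (0:ℝ) ≤ t - ρ)]
      linarith [hρ.1])
  obtain ⟨hswUs, hintUs⟩ := aux_swapU P (t := t) (fun ρ => ρ - t) (by fun_prop) 1
    one_pos.le
    (fun ρ hρ => by
      rw [Real.norm_eq_abs, _root_.abs_of_nonneg (by linarith [mem_Ioi.mp hρ] : (0:ℝ) ≤ ρ - t), one_mul])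
    hK_int.restrict
  -- norm estimates
  set F₁ : ℝ → ℝ := fun ρ => (P (Ico 0 ρ)).toReal with hF₁def
  set F₂ : ℝ → ℝ := fun ρ => (P (Ici ρ)).toReal with hF₂def
  have hF₁nn : ∀ ρ, 0 ≤ F₁ ρ := fun ρ => ENNReal.toReal_nonneg
  have hF₂nn : ∀ ρ, 0 ≤ F₂ ρ := fun ρ => ENNReal.toReal_nonneg
  have hnorm_eq : ∀ ρ : ℝ, ‖F₁ ρ • G ρ‖ = F₁ ρ * ‖G ρ‖ := fun ρ => by
    rw [norm_smul, Real.norm_eq_abs, _root_.abs_of_nonneg (hF₁nn ρ)]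
  have hnorm_eq2 : ∀ ρ : ℝ, ‖F₂ ρ • G ρ‖ = F₂ ρ * ‖G ρ‖ := fun ρ => by
    rw [norm_smul, Real.norm_eq_abs, _root_.abs_of_nonneg (hF₂nn ρ)]
  have hnormL_int : IntegrableOn (fun ρ => F₁ ρ * ‖G ρ‖) (Ioc 0 t) :=
    hintL.norm.congr (Filter.Eventually.of_forall fun ρ => hnorm_eq ρ)
  -- part (a): small ρ
  have hIa : (∫ ρ in Ioc (0:ℝ) (t/2), F₁ ρ * ‖G ρ‖) ≤ 2*M₀*‖u‖*V := by
    have hRHSint : IntegrableOn (fun ρ => (K * (2*M₀*‖u‖)) * ((t - ρ)^2)⁻¹) (Ioc 0 (t/2)) := by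
      apply IntegrableOn.mono_set _ Ioc_subset_Icc_self
      apply ContinuousOn.integrableOn_Icc
      apply ContinuousOn.mul continuousOn_const
      apply ContinuousOn.inv₀ (by fun_prop)
      intro ρ hρ
      have h2 : ρ ≤ t/2 := hρ.2
      exact pow_ne_zero 2 (ne_of_gt (by linarith : (0:ℝ) < t - ρ))
    calc (∫ ρ in Ioc (0:ℝ) (t/2), F₁ ρ * ‖G ρ‖)
        ≤ ∫ ρ in Ioc (0:ℝ) (t/2), (K * (2*M₀*‖u‖)) * ((t - ρ)^2)⁻¹ := by
          apply integral_mono_of_nonneg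
          · filter_upwards with ρ
            exact mul_nonneg (hF₁nn ρ) (norm_nonneg _)
          · exact hRHSint
          · filter_upwards [ae_restrict_mem measurableSet_Ioc] with ρ hρ
            have hρt : ρ < t := by linarith [hρ.2]
            have htρ : (0:ℝ) < (t - ρ)^2 := by
              have : (0:ℝ) < t - ρ := by linarith
              positivity
            have hcb : F₁ ρ ≤ K * ((t - ρ)^2)⁻¹ := by
              have h1 : F₁ ρ ≤ (P (Iic ρ)).toReal := by
                apply ENNReal.toReal_mono (measure_ne_top P _)
                exact measure_mono (fun y hy => le_of_lt hy.2)
              have h3 : (P (Iic ρ)).toReal ≤ K / (t - ρ)^2 :=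
                (le_div_iff₀ htρ).mpr (hcheb ρ hρt)
              rw [div_eq_mul_inv] at h3
              exact le_trans h1 h3
            calc F₁ ρ * ‖G ρ‖ ≤ (K * ((t-ρ)^2)⁻¹) * (2*M₀*‖u‖) :=
                mul_le_mul hcb (hG2M ρ) (norm_nonneg _)
                  (mul_nonneg hK0 (inv_nonneg.mpr (by positivity)))
              _ = (K * (2*M₀*‖u‖)) * ((t-ρ)^2)⁻¹ := by ring
      _ = (K * (2*M₀*‖u‖)) * (1/t) := by
          rw [integral_const_mul, aux_int_Ioc_inv_sq ht]
      _ ≤ 2*M₀*‖u‖*V := by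
          rw [mul_one_div, div_le_iff₀ ht]
          nlinarith [mul_nonneg (mul_nonneg hM0nn (norm_nonneg u)) (sub_nonneg.mpr hK_le)]
  -- convert scalar swap results to mul form
  simp only [smul_eq_mul] at hswLs hintLs hswUs hintUs
  have hA : (∫ ρ in Ioc (0:ℝ) t, F₁ ρ * (t - ρ))
      = ∫ s in Ico (0:ℝ) t, (t - s)^2/2 ∂P := by
    rw [← hswLs]
    apply setIntegral_congr_fun measurableSet_Ico
    intro s hs
    show (∫ ρ in Ioc s t, (t - ρ)) = (t - s)^2/2
    exact aux_int_Ioc_sub_right hs.2.le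
  have hB : (∫ ρ in Ioi t, F₂ ρ * (ρ - t))
      = ∫ s in Ici t, (s - t)^2/2 ∂P := by
    rw [← hswUs]
    apply setIntegral_congr_fun measurableSet_Ici
    intro s hs
    show (∫ ρ in Ioc t s, (ρ - t)) = (s - t)^2/2
    exact aux_int_Ioc_sub_left (mem_Ici.mp hs)
  have hdisj : Disjoint (Ico (0:ℝ) t) (Ici t) :=
    Set.disjoint_left.mpr fun s hs hs2 => absurd hs.2 (not_lt.mpr (mem_Ici.mp hs2))
  have hAB : (∫ s in Ico (0:ℝ) t, (t - s)^2/2 ∂P)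
      + (∫ s in Ici t, (s - t)^2/2 ∂P) ≤ K/2 := by
    have hint2 : Integrable (fun s => (s - t)^2/2) P := hK_int.div_const 2
    have hu2 : (∫ s in Ico (0:ℝ) t, (t-s)^2/2 ∂P)
        = ∫ s in Ico (0:ℝ) t, (s-t)^2/2 ∂P := by
      apply setIntegral_congr_fun measurableSet_Ico
      intro s _
      ring_nf
    rw [hu2, ← setIntegral_union hdisj measurableSet_Ici hint2.integrableOn
      hint2.integrableOn, Ico_union_Ici_eq_Ici ht.le]
    calc (∫ s in Ici (0:ℝ), (s-t)^2/2 ∂P) ≤ ∫ s, (s-t)^2/2 ∂P :=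
          setIntegral_le_integral hint2 (by filter_upwards with s; positivity)
      _ = K/2 := by rw [hKdef, integral_div]
  -- part (b): large ρ below t
  have hIb : (∫ ρ in Ioc (t/2) t, F₁ ρ * ‖G ρ‖)
      ≤ (2*M₁*‖u‖/t) * ∫ ρ in Ioc (0:ℝ) t, F₁ ρ * (t - ρ) := by
    calc (∫ ρ in Ioc (t/2) t, F₁ ρ * ‖G ρ‖)
        ≤ ∫ ρ in Ioc (t/2) t, (2*M₁*‖u‖/t) * (F₁ ρ * (t - ρ)) := by
          apply integral_mono_of_nonneg
          · filter_upwards with ρ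
            exact mul_nonneg (hF₁nn ρ) (norm_nonneg _)
          · exact (hintLs.mono_set (Ioc_subset_Ioc_left (by linarith))).const_mul _
          · filter_upwards [ae_restrict_mem measurableSet_Ioc] with ρ hρ
            have h1 := hGlow ρ hρ.1 hρ.2
            calc F₁ ρ * ‖G ρ‖ ≤ F₁ ρ * ((2*M₁*‖u‖/t) * (t - ρ)) :=
                mul_le_mul_of_nonneg_left h1 (hF₁nn ρ)
              _ = (2*M₁*‖u‖/t) * (F₁ ρ * (t - ρ)) := by ring
      _ = (2*M₁*‖u‖/t) * ∫ ρ in Ioc (t/2) t, F₁ ρ * (t - ρ) :=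
          integral_const_mul _ _
      _ ≤ (2*M₁*‖u‖/t) * ∫ ρ in Ioc (0:ℝ) t, F₁ ρ * (t - ρ) := by
          apply mul_le_mul_of_nonneg_left _ (by positivity)
          apply setIntegral_mono_set hintLs
          · filter_upwards [ae_restrict_mem measurableSet_Ioc] with ρ hρ
            exact mul_nonneg (hF₁nn ρ) (by linarith [hρ.2])
          · exact HasSubset.Subset.eventuallyLE (Ioc_subset_Ioc_left (by linarith))
  -- part (c): above t
  have hI2 : ‖∫ ρ in Ioi t, F₂ ρ • G ρ‖
      ≤ (2*M₁*‖u‖/t) * ∫ ρ in Ioi t, F₂ ρ * (ρ - t) := by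
    calc ‖∫ ρ in Ioi t, F₂ ρ • G ρ‖ ≤ ∫ ρ in Ioi t, ‖F₂ ρ • G ρ‖ :=
          norm_integral_le_integral_norm _
      _ = ∫ ρ in Ioi t, F₂ ρ * ‖G ρ‖ :=
          integral_congr_ae (Filter.Eventually.of_forall fun ρ => hnorm_eq2 ρ)
      _ ≤ ∫ ρ in Ioi t, (2*M₁*‖u‖/t) * (F₂ ρ * (ρ - t)) := by
          apply integral_mono_of_nonneg
          · filter_upwards with ρ
            exact mul_nonneg (hF₂nn ρ) (norm_nonneg _)
          · exact hintUs.const_mul _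
          · filter_upwards [ae_restrict_mem measurableSet_Ioi] with ρ hρ
            calc F₂ ρ * ‖G ρ‖ ≤ F₂ ρ * ((2*M₁*‖u‖/t)*(ρ-t)) :=
                mul_le_mul_of_nonneg_left (hGup ρ hρ) (hF₂nn ρ)
              _ = (2*M₁*‖u‖/t)*(F₂ ρ * (ρ - t)) := by ring
      _ = (2*M₁*‖u‖/t) * ∫ ρ in Ioi t, F₂ ρ * (ρ - t) :=
          integral_const_mul _ _
  -- combine the F₁ piece
  have hI1 : ‖∫ ρ in Ioc (0:ℝ) t, F₁ ρ • G ρ‖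
      ≤ (∫ ρ in Ioc (0:ℝ) (t/2), F₁ ρ * ‖G ρ‖)
        + ∫ ρ in Ioc (t/2) t, F₁ ρ * ‖G ρ‖ := by
    calc ‖∫ ρ in Ioc (0:ℝ) t, F₁ ρ • G ρ‖
        ≤ ∫ ρ in Ioc (0:ℝ) t, ‖F₁ ρ • G ρ‖ := norm_integral_le_integral_norm _
      _ = ∫ ρ in Ioc (0:ℝ) t, F₁ ρ * ‖G ρ‖ :=
          integral_congr_ae (Filter.Eventually.of_forall fun ρ => hnorm_eq ρ)
      _ = (∫ ρ in Ioc (0:ℝ) (t/2), F₁ ρ * ‖G ρ‖)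
          + ∫ ρ in Ioc (t/2) t, F₁ ρ * ‖G ρ‖ := by
          rw [← setIntegral_union (Ioc_disjoint_Ioc_of_le le_rfl) measurableSet_Ioc
            (hnormL_int.mono_set (Ioc_subset_Ioc_right (by linarith)))
            (hnormL_int.mono_set (Ioc_subset_Ioc_left (by linarith))),
            Ioc_union_Ioc_eq_Ioc (by linarith) (by linarith)]
  -- final assembly
  rw [hgoal_int, hdecomp, hsplit, hIio, hIcoΦ, hIciΦ, hswL, hswU]
  have hc0 : (0:ℝ) ≤ 2*M₁*‖u‖/t := by positivity
  calc ‖-(∫ ρ in Ioc (0:ℝ) t, F₁ ρ • G ρ) + ∫ ρ in Ioi t, F₂ ρ • G ρ‖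
      ≤ ‖∫ ρ in Ioc (0:ℝ) t, F₁ ρ • G ρ‖ + ‖∫ ρ in Ioi t, F₂ ρ • G ρ‖ := by
        refine le_trans (norm_add_le _ _) ?_
        rw [norm_neg]
    _ ≤ ((∫ ρ in Ioc (0:ℝ) (t/2), F₁ ρ * ‖G ρ‖)
          + ∫ ρ in Ioc (t/2) t, F₁ ρ * ‖G ρ‖)
        + (2*M₁*‖u‖/t) * ∫ ρ in Ioi t, F₂ ρ * (ρ - t) := add_le_add hI1 hI2
    _ ≤ (2*M₀*‖u‖*V + (2*M₁*‖u‖/t) * ∫ ρ in Ioc (0:ℝ) t, F₁ ρ * (t - ρ))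
        + (2*M₁*‖u‖/t) * ∫ ρ in Ioi t, F₂ ρ * (ρ - t) := by
        exact add_le_add_left (add_le_add hIa hIb) _
    _ = 2*M₀*‖u‖*V + (2*M₁*‖u‖/t) * ((∫ s in Ico (0:ℝ) t, (t - s)^2/2 ∂P)
          + ∫ s in Ici t, (s - t)^2/2 ∂P) := by
        rw [hA, hB]; ring
    _ ≤ 2*M₀*‖u‖*V + (2*M₁*‖u‖/t) * (K/2) := by
        exact add_le_add_right (mul_le_mul_of_nonneg_left hAB hc0) _
    _ ≤ 2*M₀*‖u‖*V + M₁*V*‖u‖ := by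
        apply add_le_add_right
        rw [div_mul_eq_mul_div, div_le_iff₀ ht]
        nlinarith [mul_nonneg (mul_nonneg hM1nn (norm_nonneg u)) (sub_nonneg.mpr hK_le)]
    _ = (2 * M₀ + M₁) * V * ‖u‖ := by ring
end
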